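/- arXiv:2407.17926 — 8 statements merged into one kernel-verified Lean document; each statement's English description precedes it below -/
import Mathlib

section
/- Let λ > 0 and let g : [0, a] → ℝ be a continuous nonnegative function satisfying g(t) ≤ λ/2 + ∫₀ᵗ e^{-λ s} g(s)² ds for all t ∈ [0, a]. Then g(t) ≤ λ for all t ∈ [0, a]. -/
/-- Nonlinear Gronwall-type inequality: if a continuous nonnegative `g` on `[0, a]`
satisfies `g t ≤ λ/2 + ∫₀ᵗ e^{-λ s} g(s)² ds`, then `g t ≤ λ` on `[0, a]`. -/
theorem stmt_0 (a lam : ℝ) (ha : 0 < a) (hlam : 0 < lam) (g : ℝ → ℝ)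
    (hg : ContinuousOn g (Set.Icc 0 a))
    (hnn : ∀ t ∈ Set.Icc (0:ℝ) a, 0 ≤ g t)
    (hineq : ∀ t ∈ Set.Icc (0:ℝ) a,
      g t ≤ lam / 2 + ∫ s in (0:ℝ)..t, Real.exp (-lam * s) * (g s) ^ 2) :
    ∀ t ∈ Set.Icc (0:ℝ) a, g t ≤ lam := by
  set f : ℝ → ℝ := fun s => Real.exp (-lam * s) * g s ^ 2 with hf_def
  have hf_cont : ContinuousOn f (Set.Icc 0 a) :=
    ((Real.continuous_exp.comp (continuous_const.mul continuous_id)).continuousOn).mul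
      (hg.pow 2)
  have hf_nonneg : ∀ s, 0 ≤ f s := fun s =>
    mul_nonneg (Real.exp_pos _).le (sq_nonneg _)
  set u : ℝ → ℝ := fun t => lam / 2 + ∫ s in (0:ℝ)..t, f s with hu_def
  have hu_pos : ∀ t ∈ Set.Icc (0:ℝ) a, 0 < u t := by
    intro t ht
    have hint : (0:ℝ) ≤ ∫ s in (0:ℝ)..t, f s :=
      intervalIntegral.integral_nonneg ht.1 (fun s _ => hf_nonneg s)
    have : 0 < lam / 2 := by linarith
    simp only [hu_def]; linarith
  have hgu : ∀ t ∈ Set.Icc (0:ℝ) a, g t ≤ u t := hineq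
  have hu_cont : ContinuousOn u (Set.Icc 0 a) := by
    apply continuousOn_const.add
    have h := intervalIntegral.continuousOn_primitive_interval
      (μ := MeasureTheory.volume) (a := (0:ℝ)) (b := a)
      (by rw [Set.uIcc_of_le ha.le]; exact hf_cont.integrableOn_Icc)
    rwa [Set.uIcc_of_le ha.le] at h
  have hu_deriv : ∀ t ∈ Set.Ioo (0:ℝ) a, HasDerivAt u (f t) t := by
    intro t ht
    have hsub : Set.uIcc (0:ℝ) t ⊆ Set.Icc 0 a := by
      rw [Set.uIcc_of_le ht.1.le]
      exact Set.Icc_subset_Icc le_rfl ht.2.le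
    have hii : IntervalIntegrable f MeasureTheory.volume 0 t :=
      (hf_cont.mono hsub).intervalIntegrable
    have hmeas : StronglyMeasurableAtFilter f (nhds t) :=
      (hf_cont.mono Set.Ioo_subset_Icc_self).stronglyMeasurableAtFilter isOpen_Ioo t ht
    have hca : ContinuousAt f t :=
      (hf_cont.continuousAt (Icc_mem_nhds ht.1 ht.2))
    have h := intervalIntegral.integral_hasDerivAt_right hii hmeas hca
    have h' := (hasDerivAt_const t (lam / 2)).add h
    simpa using (zero_add (f t)) ▸ h'
  set φ : ℝ → ℝ := fun t => (u t)⁻¹ - Real.exp (-lam * t) / lam with hφ_def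
  have hφ_deriv : ∀ t ∈ Set.Ioo (0:ℝ) a,
      HasDerivAt φ (-(f t) / u t ^ 2 - Real.exp (-lam * t) * (-lam * 1) / lam) t := by
    intro t ht
    have h1 : HasDerivAt (fun t => (u t)⁻¹) (-(f t) / u t ^ 2) t :=
      (hu_deriv t ht).inv (ne_of_gt (hu_pos t (Set.Ioo_subset_Icc_self ht)))
    have h2 : HasDerivAt (fun t => Real.exp (-lam * t) / lam)
        (Real.exp (-lam * t) * (-lam * 1) / lam) t :=
      (((hasDerivAt_id t).const_mul (-lam)).exp).div_const lam
    exact h1.sub h2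
  have hd_nonneg : ∀ t ∈ Set.Ioo (0:ℝ) a,
      0 ≤ -(f t) / u t ^ 2 - Real.exp (-lam * t) * (-lam * 1) / lam := by
    intro t ht
    have htI := Set.Ioo_subset_Icc_self ht
    have hup := hu_pos t htI
    have hgn := hnn t htI
    have hle := hgu t htI
    have hsq : g t ^ 2 ≤ u t ^ 2 := by nlinarith
    have h1 : f t ≤ Real.exp (-lam * t) * u t ^ 2 := by
      simp only [hf_def]
      exact mul_le_mul_of_nonneg_left hsq (Real.exp_pos _).le
    have h2 : f t / u t ^ 2 ≤ Real.exp (-lam * t) :=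
      (div_le_iff₀ (by positivity)).2 h1
    have h3 : Real.exp (-lam * t) * (-lam * 1) / lam = -Real.exp (-lam * t) := by
      field_simp
    rw [h3]
    have : -(f t) / u t ^ 2 = -(f t / u t ^ 2) := by ring
    rw [this]
    linarith
  have hmono : MonotoneOn φ (Set.Icc 0 a) := by
    apply monotoneOn_of_deriv_nonneg (convex_Icc 0 a)
    · exact ((hu_cont.inv₀ (fun t ht => ne_of_gt (hu_pos t ht))).sub
        (((Real.continuous_exp.comp (continuous_const.mul continuous_id)).continuousOn).div_const lam))
    · intro t ht
      rw [interior_Icc] at ht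
      exact (hφ_deriv t ht).differentiableAt.differentiableWithinAt
    · intro t ht
      rw [interior_Icc] at ht
      rw [(hφ_deriv t ht).deriv]
      exact hd_nonneg t ht
  intro t ht
  have h0 : (0:ℝ) ∈ Set.Icc (0:ℝ) a := ⟨le_rfl, ha.le⟩
  have hφ0 : φ 0 = lam⁻¹ := by
    simp only [hφ_def, hu_def, intervalIntegral.integral_same, mul_zero, Real.exp_zero,
      add_zero]
    field_simp
    ring
  have hmle : φ 0 ≤ φ t := hmono h0 ht ht.1
  rw [hφ0] at hmle
  have hexp : 0 < Real.exp (-lam * t) / lam := by positivity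
  have hinv : lam⁻¹ ≤ (u t)⁻¹ := by
    simp only [hφ_def] at hmle
    linarith
  have hule : u t ≤ lam := by
    have := (inv_le_inv₀ hlam (hu_pos t ht)).mp hinv
    exact this
  exact (hgu t ht).trans hule
end

section
/- Let K, λ > 0, let T > 0, and let h : [0, T] → ℝ be a continuous nonnegative function satisfying h(t) ≤ K e^{-λ(T-t)} + K e^{-λ(T-t)} ∫ₜᵀ (h(s) + 1) ds for all t ∈ [0, T]. Then there exists a constant K' > 0 depending only on K and λ (not on T) such that h(t) ≤ K' e^{-(λ/2)(T-t)} for all t ∈ [0, T]. -/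
/-- An integral inequality with exponentially decaying kernel gives uniform
exponential decay with rate `λ/2`, with a constant independent of `T`. -/
theorem stmt_1 (K lam : ℝ) (hK : 0 < K) (hlam : 0 < lam) :
    ∃ K' > (0:ℝ), ∀ T : ℝ, 0 < T → ∀ h : ℝ → ℝ,
      ContinuousOn h (Set.Icc 0 T) →
      (∀ t ∈ Set.Icc (0:ℝ) T, 0 ≤ h t) →
      (∀ t ∈ Set.Icc (0:ℝ) T,
        h t ≤ K * Real.exp (-lam * (T - t)) +
          K * Real.exp (-lam * (T - t)) * ∫ s in t..T, (h s + 1)) →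
      ∀ t ∈ Set.Icc (0:ℝ) T, h t ≤ K' * Real.exp (-(lam / 2) * (T - t)) := by
  refine ⟨K * Real.exp (K / lam) * (1 + 2 / lam), by positivity, ?_⟩
  intro T hT h hcont hpos hineq t ht
  -- Replace `h` by its clamped (globally continuous) version `g`.
  set g : ℝ → ℝ := fun x => h (min (max x 0) T) with hgdef
  have hclamp : ∀ x : ℝ, min (max x 0) T ∈ Set.Icc 0 T := by
    intro x
    constructor
    · exact le_min (le_max_right x 0) hT.le
    · exact min_le_right _ _
  have hgc : Continuous g :=
    hcont.comp_continuous (by continuity) hclamp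
  have hge : ∀ x ∈ Set.Icc (0:ℝ) T, g x = h x := by
    intro x hx
    simp only [hgdef]
    rw [max_eq_left hx.1, min_eq_left hx.2]
  have hgpos : ∀ x : ℝ, 0 ≤ g x := fun x => hpos _ (hclamp x)
  -- Basic objects
  set I : ℝ → ℝ := fun x => ∫ s in (0:ℝ)..x, (g s + 1) with hIdef
  have hgint : ∀ a b : ℝ, IntervalIntegrable (fun s => g s + 1) MeasureTheory.volume a b :=
    fun a b => (hgc.add continuous_const).intervalIntegrable a b
  have hIder : ∀ x : ℝ, HasDerivAt I (g x + 1) x := by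
    intro x
    exact intervalIntegral.integral_hasDerivAt_right (hgint 0 x)
      ((hgc.add continuous_const).stronglyMeasurableAtFilter _ _)
      ((hgc.add continuous_const).continuousAt)
  set G : ℝ → ℝ := fun x => 1 + I T - I x with hGdef
  have hGder : ∀ x : ℝ, HasDerivAt G (-(g x + 1)) x := by
    intro x
    exact ((hasDerivAt_const x (1 + I T)).sub (hIder x)).congr_deriv (by ring)
  -- rewrite the interval integral of h in terms of G
  have hint_eq : ∀ x ∈ Set.Icc (0:ℝ) T, (∫ s in x..T, (h s + 1)) = G x - 1 := by
    intro x hx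
    have h1 : (∫ s in x..T, (h s + 1)) = ∫ s in x..T, (g s + 1) := by
      apply intervalIntegral.integral_congr
      intro s hs
      rw [Set.uIcc_of_le hx.2] at hs
      show h s + 1 = g s + 1
      rw [hge s ⟨hx.1.trans hs.1, hs.2⟩]
    have h2 : I x + (∫ s in x..T, (g s + 1)) = I T :=
      intervalIntegral.integral_add_adjacent_intervals (hgint 0 x) (hgint x T)
    rw [h1]
    simp only [hGdef]
    linarith
  -- the inequality in terms of g and G
  have hineq' : ∀ x ∈ Set.Icc (0:ℝ) T, g x ≤ K * Real.exp (-lam * (T - x)) * G x := by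
    intro x hx
    have := hineq x hx
    rw [hint_eq x hx, hge x hx] at *
    nlinarith [this]
  -- G is nonnegative on [0,T]
  have hGnonneg : ∀ x ∈ Set.Icc (0:ℝ) T, 0 ≤ G x := by
    intro x hx
    have h2 : (0:ℝ) ≤ ∫ s in x..T, (g s + 1) := by
      apply intervalIntegral.integral_nonneg hx.2
      intro s _
      have := hgpos s; linarith
    have h3 : I x + (∫ s in x..T, (g s + 1)) = I T :=
      intervalIntegral.integral_add_adjacent_intervals (hgint 0 x) (hgint x T)
    simp only [hGdef]
    linarith
  -- The exponential factor
  set E : ℝ → ℝ := fun x => Real.exp (K / lam * Real.exp (-lam * (T - x))) with hEdef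
  have hEder : ∀ x : ℝ, HasDerivAt E (K * Real.exp (-lam * (T - x)) * E x) x := by
    intro x
    have h1 : HasDerivAt (fun x : ℝ => -lam * (T - x)) lam x := by
      have := ((hasDerivAt_const x T).sub (hasDerivAt_id x)).const_mul (-lam)
      simpa using this
    have h2 : HasDerivAt (fun x : ℝ => K / lam * Real.exp (-lam * (T - x)))
        (K / lam * (Real.exp (-lam * (T - x)) * lam)) x :=
      ((h1.exp)).const_mul (K / lam)
    have h3 := h2.exp
    have heq : K / lam * (Real.exp (-lam * (T - x)) * lam) = K * Real.exp (-lam * (T - x)) := by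
      field_simp
    rw [heq] at h3
    have : Real.exp (K / lam * Real.exp (-lam * (T - x))) = E x := rfl
    simpa [hEdef, mul_comm] using h3
  have hE1 : ∀ x : ℝ, 1 ≤ E x := by
    intro x
    have : (0:ℝ) ≤ K / lam * Real.exp (-lam * (T - x)) := by positivity
    calc (1:ℝ) = Real.exp 0 := by simp
    _ ≤ E x := Real.exp_le_exp.mpr this
  have hEle : ∀ x ∈ Set.Icc (0:ℝ) T, E x ≤ Real.exp (K / lam) := by
    intro x hx
    apply Real.exp_le_exp.mpr
    have h1 : Real.exp (-lam * (T - x)) ≤ 1 := by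
      apply Real.exp_le_one_iff.mpr
      nlinarith [hx.2]
    calc K / lam * Real.exp (-lam * (T - x)) ≤ K / lam * 1 := by
          apply mul_le_mul_of_nonneg_left h1 (by positivity)
    _ = K / lam := by ring
  -- The monotone quantity Q
  set Q : ℝ → ℝ := fun x => G x * E x + Real.exp (K / lam) * x with hQdef
  have hQder : ∀ x : ℝ, HasDerivAt Q
      (-(g x + 1) * E x + G x * (K * Real.exp (-lam * (T - x)) * E x) + Real.exp (K / lam)) x := by
    intro x
    have h1 := ((hGder x).mul (hEder x)).add ((hasDerivAt_id x).const_mul (Real.exp (K / lam)))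
    exact h1.congr_deriv (by ring)
  have hQmono : MonotoneOn Q (Set.Icc 0 T) := by
    apply monotoneOn_of_deriv_nonneg (convex_Icc 0 T)
    · exact fun x _ => ((hQder x).continuousAt).continuousWithinAt
    · intro x _
      exact ((hQder x).differentiableAt).differentiableWithinAt
    · intro x hx
      rw [interior_Icc] at hx
      rw [(hQder x).deriv]
      have hxIcc : x ∈ Set.Icc (0:ℝ) T := ⟨hx.1.le, hx.2.le⟩
      have h1 := hineq' x hxIcc
      have h2 := hGnonneg x hxIcc
      have h3 := hE1 x
      have h4 := hEle x hxIcc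
      have h5 : (g x + 1) * E x ≤ K * Real.exp (-lam * (T - x)) * G x * E x + E x := by
        have h6 := mul_le_mul_of_nonneg_right h1 (by linarith : (0:ℝ) ≤ E x)
        nlinarith [h6]
      have h7 : -(g x + 1) * E x + G x * (K * Real.exp (-lam * (T - x)) * E x) =
          -((g x + 1) * E x) + K * Real.exp (-lam * (T - x)) * G x * E x := by ring
      clear_value g I G E Q
      linarith [h5, h4, h7]
  -- Conclude: bound on G
  have hQle := hQmono ht ⟨hT.le, le_refl T⟩ ht.2
  have hGT : G T = 1 := by simp [hGdef]
  have hET : E T = Real.exp (K / lam) := by simp [hEdef]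
  have hGbound : G t ≤ Real.exp (K / lam) * (1 + (T - t)) := by
    have h1 : G t * E t + Real.exp (K / lam) * t ≤ 1 * Real.exp (K / lam) + Real.exp (K / lam) * T := by
      have := hQle
      simp only [hQdef, hGT, hET] at this ⊢
      linarith
    have h2 : G t ≤ G t * E t := by
      nlinarith [hGnonneg t ht, hE1 t]
    have h3 : Real.exp (K / lam) * (1 + (T - t)) =
        1 * Real.exp (K / lam) + Real.exp (K / lam) * T - Real.exp (K / lam) * t := by ring
    clear_value g I G E Q
    linarith [h1, h2, h3]
  -- Final estimate
  have hτ : 0 ≤ T - t := by linarith [ht.2]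
  have hfin : (1 + (T - t)) * Real.exp (-lam * (T - t)) ≤
      (1 + 2 / lam) * Real.exp (-(lam / 2) * (T - t)) := by
    rw [show -lam * (T - t) = -(lam / 2) * (T - t) + -(lam / 2) * (T - t) by ring,
      Real.exp_add]
    have hE2 : (1 + (T - t)) * Real.exp (-(lam / 2) * (T - t)) ≤ 1 + 2 / lam := by
      have h1 : 1 + lam / 2 * (T - t) ≤ Real.exp (lam / 2 * (T - t)) := by
        have := Real.add_one_le_exp (lam / 2 * (T - t)); linarith
      rw [show -(lam / 2) * (T - t) = -(lam / 2 * (T - t)) by ring, Real.exp_neg]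
      rw [mul_inv_le_iff₀ (Real.exp_pos _)]
      have h2 : (1 + 2 / lam) * (1 + lam / 2 * (T - t)) = 1 + (T - t) + 2 / lam + lam / 2 * (T - t) := by
        field_simp; ring
      nlinarith [Real.exp_pos (lam / 2 * (T - t)), mul_le_mul_of_nonneg_left h1
        (by positivity : (0:ℝ) ≤ 1 + 2 / lam), mul_nonneg hlam.le hτ,
        div_nonneg (by norm_num : (0:ℝ) ≤ 2) hlam.le]
    calc (1 + (T - t)) * (Real.exp (-(lam / 2) * (T - t)) * Real.exp (-(lam / 2) * (T - t)))
        = ((1 + (T - t)) * Real.exp (-(lam / 2) * (T - t))) * Real.exp (-(lam / 2) * (T - t)) := by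
          ring
      _ ≤ (1 + 2 / lam) * Real.exp (-(lam / 2) * (T - t)) :=
          mul_le_mul_of_nonneg_right hE2 (Real.exp_pos _).le
  have h1 := hineq' t ht
  have h2 : K * Real.exp (-lam * (T - t)) * G t ≤
      K * Real.exp (K / lam) * ((1 + (T - t)) * Real.exp (-lam * (T - t))) := by
    have := mul_le_mul_of_nonneg_left hGbound
      (by positivity : (0:ℝ) ≤ K * Real.exp (-lam * (T - t)))
    nlinarith [Real.exp_pos (-lam * (T - t))]
  have h3 : K * Real.exp (K / lam) * ((1 + (T - t)) * Real.exp (-lam * (T - t))) ≤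
      K * Real.exp (K / lam) * ((1 + 2 / lam) * Real.exp (-(lam / 2) * (T - t))) :=
    mul_le_mul_of_nonneg_left hfin (by positivity)
  rw [← hge t ht]
  calc g t ≤ K * Real.exp (-lam * (T - t)) * G t := h1
    _ ≤ K * Real.exp (K / lam) * ((1 + (T - t)) * Real.exp (-lam * (T - t))) := h2
    _ ≤ K * Real.exp (K / lam) * ((1 + 2 / lam) * Real.exp (-(lam / 2) * (T - t))) := h3
    _ = K * Real.exp (K / lam) * (1 + 2 / lam) * Real.exp (-(lam / 2) * (T - t)) := by ring
end

section
/- Let A : ℝ → Matrix (Fin n) (Fin n) ℝ be continuous and τ-periodic, and suppose the fundamental solution Φ of Φ'(t) = A(t)Φ(t), Φ(0) = I satisfies ‖Φ(t)Φ(s)^{-1}‖ ≤ K e^{-λ(t-s)} for all 0 ≤ s ≤ t and some K, λ > 0. Let q : ℝ → ℝⁿ be continuous, bounded, and τ-periodic. Then the ODE η'(t) + A(t)ᵀ η(t) + q(t) = 0 on [0, τ] with boundary condition η(0) = η(τ) admits a unique solution. -/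
open Matrix Set

lemma aux_norm_mulVec_le {n : ℕ} (M : Matrix (Fin n) (Fin n) ℝ) (x : Fin n → ℝ) {C : ℝ}
    (hC0 : 0 ≤ C) (hC : ∀ i, ∑ j, |M i j| ≤ C) : ‖M *ᵥ x‖ ≤ C * ‖x‖ := by
  rw [pi_norm_le_iff_of_nonneg (by positivity)]
  intro i
  calc ‖(M *ᵥ x) i‖ = |∑ j, M i j * x j| := rfl
    _ ≤ ∑ j, |M i j * x j| := Finset.abs_sum_le_sum_abs _ _
    _ ≤ ∑ j, |M i j| * ‖x‖ := by
        refine Finset.sum_le_sum fun j _ => ?_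
        rw [abs_mul]
        exact mul_le_mul_of_nonneg_left (norm_le_pi_norm x j) (abs_nonneg _)
    _ = (∑ j, |M i j|) * ‖x‖ := by rw [Finset.sum_mul]
    _ ≤ C * ‖x‖ := mul_le_mul_of_nonneg_right (hC i) (norm_nonneg _)

lemma aux_lipschitz {n : ℕ} (M : Matrix (Fin n) (Fin n) ℝ) {C : ℝ}
    (hC0 : 0 ≤ C) (hC : ∀ i, ∑ j, |M i j| ≤ C) :
    LipschitzWith C.toNNReal (fun x : Fin n → ℝ => M *ᵥ x) := by
  apply LipschitzWith.of_dist_le_mul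
  intro x y
  rw [dist_eq_norm, dist_eq_norm, ← Matrix.mulVec_sub, Real.coe_toNNReal _ hC0]
  exact aux_norm_mulVec_le M (x - y) hC0 hC

/-- Uniqueness for the linear ODE `x' = B t *ᵥ x` on `[a, b]`. -/
lemma aux_ode_unique {n : ℕ} (B : ℝ → Matrix (Fin n) (Fin n) ℝ) (hB : Continuous B)
    (a b : ℝ) (f g : ℝ → Fin n → ℝ)
    (hf : ∀ t ∈ Set.Icc a b, HasDerivAt f ((B t) *ᵥ (f t)) t)
    (hg : ∀ t ∈ Set.Icc a b, HasDerivAt g ((B t) *ᵥ (g t)) t)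
    (hfg : f a = g a) : Set.EqOn f g (Set.Icc a b) := by
  rcases le_or_gt a b with hab | hab
  swap
  · rw [Set.Icc_eq_empty_of_lt hab]; exact fun t ht => ht.elim
  set c : ℝ → ℝ := fun t => max a (min t b) with hc_def
  have hc : Continuous c := continuous_const.max (continuous_id.min continuous_const)
  have hcmem : ∀ t, c t ∈ Set.Icc a b :=
    fun t => ⟨le_max_left _ _, max_le hab (min_le_right _ _)⟩
  have hceq : ∀ t ∈ Set.Icc a b, c t = t := fun t ht => by
    simp only [hc_def, min_eq_left ht.2, max_eq_right ht.1]
  obtain ⟨C₀, hC₀⟩ : ∃ C₀, ∀ t ∈ Set.Icc a b, (∑ i, ∑ j, |B t i j|) ≤ C₀ := by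
    obtain ⟨C₀, hC₀⟩ := (isCompact_Icc.image
      (show Continuous fun t => ∑ i, ∑ j, |B t i j| by
        refine continuous_finset_sum _ fun i _ => continuous_finset_sum _ fun j _ => ?_
        exact ((continuous_apply j).comp ((continuous_apply i).comp hB)).abs)).bddAbove
    exact ⟨C₀, fun t ht => hC₀ ⟨t, ht, rfl⟩⟩
  have hC0' : 0 ≤ max C₀ 0 := le_max_right _ _
  have hrow : ∀ t, ∀ i, ∑ j, |B (c t) i j| ≤ max C₀ 0 := by
    intro t i
    calc ∑ j, |B (c t) i j| ≤ ∑ i', ∑ j, |B (c t) i' j| := by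
          refine Finset.single_le_sum (f := fun i' => ∑ j, |B (c t) i' j|)
            (fun i' _ => Finset.sum_nonneg fun j _ => abs_nonneg _) (Finset.mem_univ i)
      _ ≤ C₀ := hC₀ _ (hcmem t)
      _ ≤ max C₀ 0 := le_max_left _ _
  exact ODE_solution_unique (v := fun t x => (B (c t)) *ᵥ x)
    (K := (max C₀ 0).toNNReal) (f := f) (g := g) (a := a) (b := b)
    (fun t => aux_lipschitz _ hC0' (hrow t))
    (fun t ht => ((hf t ht).continuousAt).continuousWithinAt)
    (fun t ht => by
      have := (hf t (Set.Ico_subset_Icc_self ht)).hasDerivWithinAt (s := Set.Ici t)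
      simpa only [hceq t (Set.Ico_subset_Icc_self ht)] using this)
    (fun t ht => ((hg t ht).continuousAt).continuousWithinAt)
    (fun t ht => by
      have := (hg t (Set.Ico_subset_Icc_self ht)).hasDerivWithinAt (s := Set.Ici t)
      simpa only [hceq t (Set.Ico_subset_Icc_self ht)] using this)
    hfg

lemma aux_det_diff {n : ℕ} {M : ℝ → Matrix (Fin n) (Fin n) ℝ} {t : ℝ}
    (h : ∀ i j, DifferentiableAt ℝ (fun s => M s i j) t) :
    DifferentiableAt ℝ (fun s => (M s).det) t := by
  have : (fun s => (M s).det)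
      = fun s => ∑ σ : Equiv.Perm (Fin n), (Equiv.Perm.sign σ : ℝ) * ∏ i, M s (σ i) i := by
    funext s
    rw [Matrix.det_apply']
  rw [this]
  refine DifferentiableAt.fun_sum fun σ _ => DifferentiableAt.const_mul ?_ _
  exact DifferentiableAt.fun_finsetProd fun i _ => h (σ i) i

lemma aux_inv_entry_diff {n : ℕ} {M : ℝ → Matrix (Fin n) (Fin n) ℝ} {t : ℝ}
    (h : ∀ i j, DifferentiableAt ℝ (fun s => M s i j) t)
    (hdet : (M t).det ≠ 0) (i j : Fin n) :
    DifferentiableAt ℝ (fun s => (M s)⁻¹ i j) t := by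
  have heq : ∀ s, (M s)⁻¹ i j = ((M s).det)⁻¹ * (M s).adjugate i j := by
    intro s
    rw [Matrix.inv_def]
    simp [Ring.inverse_eq_inv']
  simp only [heq]
  refine DifferentiableAt.mul ((aux_det_diff h).inv hdet) ?_
  have hadj : ∀ s, (M s).adjugate i j = ((M s).updateRow j (Pi.single i 1)).det := by
    intro s; rw [Matrix.adjugate_apply]
  simp only [hadj]
  refine aux_det_diff fun k l => ?_
  simp only [Matrix.updateRow_apply]
  by_cases hk : k = j
  · simp [hk]
  · simp only [hk, if_false]
    exact h k l

/-- derivative of `s ↦ Φ s *ᵥ x` from entrywise derivatives. -/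
lemma aux_mulVec_deriv {n : ℕ} {Φ : ℝ → Matrix (Fin n) (Fin n) ℝ} {x : Fin n → ℝ} {t : ℝ}
    {D : Matrix (Fin n) (Fin n) ℝ}
    (h : ∀ i j, HasDerivAt (fun s => Φ s i j) (D i j) t) :
    HasDerivAt (fun s => Φ s *ᵥ x) (D *ᵥ x) t := by
  rw [hasDerivAt_pi]
  intro i
  have h1 : (D *ᵥ x) i = ∑ j, D i j * x j := rfl
  have h2 : (fun s => (Φ s *ᵥ x) i) = fun s => ∑ j, Φ s i j * x j := rfl
  rw [h1, h2]
  exact HasDerivAt.fun_sum fun j _ => (h i j).mul_const (x j)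

/-- Unique solvability of the periodic boundary value problem for the adjoint
linear ODE `η' + Aᵀη + q = 0`, `η(0) = η(τ)`, under exponential stability of the
fundamental solution `Φ` of `Φ' = AΦ`. -/
theorem stmt_6 {n : ℕ} (τ : ℝ) (hτ : 0 < τ)
    (A : ℝ → Matrix (Fin n) (Fin n) ℝ)
    (hAcont : Continuous A)
    (hAper : ∀ t : ℝ, A (t + τ) = A t)
    (Φ : ℝ → Matrix (Fin n) (Fin n) ℝ)
    (hΦ : ∀ (t : ℝ) (i j : Fin n),
      HasDerivAt (fun s => Φ s i j) ((A t * Φ t) i j) t)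
    (hΦ0 : Φ 0 = 1)
    (K lam : ℝ) (hK : 0 < K) (hlam : 0 < lam)
    (hstab : ∀ s t : ℝ, 0 ≤ s → s ≤ t → ∀ x : Fin n → ℝ,
      ‖(Φ t * (Φ s)⁻¹).mulVec x‖ ≤ K * Real.exp (-lam * (t - s)) * ‖x‖)
    (q : ℝ → (Fin n → ℝ))
    (hqcont : Continuous q)
    (hqbd : ∃ C : ℝ, ∀ t : ℝ, ‖q t‖ ≤ C)
    (hqper : ∀ t : ℝ, q (t + τ) = q t) :
    ∃ η : ℝ → (Fin n → ℝ),
      (∀ t ∈ Set.Icc (0:ℝ) τ,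
        HasDerivAt η (-((A t)ᵀ.mulVec (η t) + q t)) t) ∧ η 0 = η τ ∧
      ∀ η' : ℝ → (Fin n → ℝ),
        (∀ t ∈ Set.Icc (0:ℝ) τ,
          HasDerivAt η' (-((A t)ᵀ.mulVec (η' t) + q t)) t) → η' 0 = η' τ →
        ∀ t ∈ Set.Icc (0:ℝ) τ, η' t = η t := by
  -- basic facts about Φ
  have hΦd : ∀ (t : ℝ) (i j : Fin n), DifferentiableAt ℝ (fun s => Φ s i j) t :=
    fun t i j => (hΦ t i j).differentiableAt
  have hΦc : ∀ i j, Continuous fun s => Φ s i j :=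
    fun i j => continuous_iff_continuousAt.2 fun t => (hΦ t i j).continuousAt
  -- `s ↦ Φ s *ᵥ x` solves the ODE
  have hsol : ∀ (x : Fin n → ℝ) (t : ℝ),
      HasDerivAt (fun s => Φ s *ᵥ x) (A t *ᵥ (Φ t *ᵥ x)) t := by
    intro x t
    have := aux_mulVec_deriv (x := x) (fun i j => hΦ t i j)
    rwa [Matrix.mulVec_mulVec]
  -- invertibility of Φ t for every t
  have hker : ∀ t₀ : ℝ, ∀ x : Fin n → ℝ, Φ t₀ *ᵥ x = 0 → x = 0 := by
    intro t₀ x hx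
    rcases le_or_gt 0 t₀ with h0 | h0
    · -- backward: g s = Φ (t₀ - s) *ᵥ x on [0, t₀]
      set g : ℝ → (Fin n → ℝ) := fun s => Φ (t₀ - s) *ᵥ x with hgdef
      have hgderiv : ∀ s : ℝ, HasDerivAt g ((-(A (t₀ - s))) *ᵥ (g s)) s := by
        intro s₀
        have hkey : ∀ i j, HasDerivAt (fun s => Φ (t₀ - s) i j)
            ((-(A (t₀ - s₀) * Φ (t₀ - s₀))) i j) s₀ := by
          intro i j
          have h1 := HasDerivAt.comp s₀ (hΦ (t₀ - s₀) i j) ((hasDerivAt_id s₀).const_sub t₀)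
          simp only [Function.comp_def] at h1
          simpa using h1
        have := aux_mulVec_deriv (x := x) hkey
        have heq : (-(A (t₀ - s₀) * Φ (t₀ - s₀))) *ᵥ x = (-(A (t₀ - s₀))) *ᵥ (g s₀) := by
          rw [hgdef]
          rw [Matrix.neg_mulVec, Matrix.neg_mulVec, Matrix.mulVec_mulVec]
        rwa [heq] at this
      have h0eq : Set.EqOn g (fun _ => (0 : Fin n → ℝ)) (Set.Icc 0 t₀) := by
        refine aux_ode_unique (fun s => -(A (t₀ - s))) ?_ 0 t₀ g _ (fun t _ => hgderiv t)
          (fun t _ => by simpa [Matrix.mulVec_zero] using hasDerivAt_const t (0 : Fin n → ℝ))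
          ?_
        · exact (hAcont.comp (continuous_const.sub continuous_id)).neg
        · simpa [hgdef] using hx
      have := h0eq ⟨le_refl 0, h0⟩ -- wrong endpoint; we want t₀
      have h2 := h0eq (Set.mem_Icc.mpr ⟨le_refl 0, h0⟩)
      have h3 := h0eq (Set.mem_Icc.mpr ⟨h0, le_refl t₀⟩)
      have : g t₀ = 0 := h3
      rw [hgdef] at this
      simp only [sub_self, hΦ0, Matrix.one_mulVec] at this
      exact this
    · -- forward: g s = Φ (t₀ + s) *ᵥ x on [0, -t₀]
      set g : ℝ → (Fin n → ℝ) := fun s => Φ (t₀ + s) *ᵥ x with hgdef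
      have hgderiv : ∀ s : ℝ, HasDerivAt g ((A (t₀ + s)) *ᵥ (g s)) s := by
        intro s₀
        have hkey : ∀ i j, HasDerivAt (fun s => Φ (t₀ + s) i j)
            ((A (t₀ + s₀) * Φ (t₀ + s₀)) i j) s₀ := by
          intro i j
          have h1 := HasDerivAt.comp s₀ (hΦ (t₀ + s₀) i j) ((hasDerivAt_id s₀).const_add t₀)
          simp only [Function.comp_def] at h1
          simpa using h1
        have := aux_mulVec_deriv (x := x) hkey
        rwa [← Matrix.mulVec_mulVec] at this
      have h0eq : Set.EqOn g (fun _ => (0 : Fin n → ℝ)) (Set.Icc 0 (-t₀)) := by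
        refine aux_ode_unique (fun s => A (t₀ + s)) ?_ 0 (-t₀) g _ (fun t _ => hgderiv t)
          (fun t _ => by simpa [Matrix.mulVec_zero] using hasDerivAt_const t (0 : Fin n → ℝ))
          ?_
        · exact hAcont.comp (continuous_const.add continuous_id)
        · simpa [hgdef] using hx
      have h3 := h0eq (Set.mem_Icc.mpr ⟨le_of_lt (neg_pos.mpr h0), le_refl (-t₀)⟩)
      have : g (-t₀) = 0 := h3
      rw [hgdef] at this
      simp only [add_neg_cancel, hΦ0, Matrix.one_mulVec] at this
      exact this
  have hunit : ∀ t : ℝ, IsUnit (Φ t) := by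
    intro t₀
    rw [← Matrix.mulVec_injective_iff_isUnit]
    intro x y hxy
    have := hker t₀ (x - y) (by rw [Matrix.mulVec_sub, hxy, sub_self])
    exact sub_eq_zero.mp this
  have hdetΦ : ∀ t, IsUnit (Φ t).det := fun t => (Matrix.isUnit_iff_isUnit_det _).mp (hunit t)
  have hdetΦ' : ∀ t, (Φ t).det ≠ 0 := fun t => (hdetΦ t).ne_zero
  -- periodicity shift
  have hshift : ∀ (x : Fin n → ℝ) (t : ℝ), 0 ≤ t → Φ (t + τ) *ᵥ x = Φ t *ᵥ (Φ τ *ᵥ x) := by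
    intro x t ht
    have hf : ∀ s : ℝ, HasDerivAt (fun u => Φ (u + τ) *ᵥ x) (A s *ᵥ (Φ (s + τ) *ᵥ x)) s := by
      intro s₀
      have hkey : ∀ i j, HasDerivAt (fun u => Φ (u + τ) i j)
          ((A (s₀ + τ) * Φ (s₀ + τ)) i j) s₀ := by
        intro i j
        have h1 := HasDerivAt.comp s₀ (hΦ (s₀ + τ) i j) ((hasDerivAt_id s₀).add_const τ)
        simp only [Function.comp_def] at h1
        simpa using h1
      have := aux_mulVec_deriv (x := x) hkey
      rw [hAper s₀] at this
      rwa [← Matrix.mulVec_mulVec] at this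
    have heq := aux_ode_unique A hAcont 0 t (fun u => Φ (u + τ) *ᵥ x)
      (fun u => Φ u *ᵥ (Φ τ *ᵥ x))
      (fun s _ => hf s) (fun s _ => hsol (Φ τ *ᵥ x) s)
      (by simp [hΦ0, Matrix.one_mulVec])
    exact heq (Set.mem_Icc.mpr ⟨ht, le_refl t⟩)
  have hIunit : IsUnit (1 - Φ τ) := by
    rw [← Matrix.mulVec_injective_iff_isUnit]
    have hker1 : ∀ x : Fin n → ℝ, (1 - Φ τ) *ᵥ x = 0 → x = 0 := by
      intro x hx
      have hfix : Φ τ *ᵥ x = x := by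
        rw [Matrix.sub_mulVec, Matrix.one_mulVec] at hx
        have := sub_eq_zero.mp hx
        exact this.symm
      have hm : ∀ m : ℕ, Φ (m * τ) *ᵥ x = x := by
        intro m
        induction m with
        | zero => simp [hΦ0, Matrix.one_mulVec]
        | succ m ih =>
          have : ((m + 1 : ℕ) : ℝ) * τ = (m : ℝ) * τ + τ := by push_cast; ring
          rw [this, hshift x ((m : ℝ) * τ) (by positivity), hfix, ih]
      by_contra hx0
      have hxpos : 0 < ‖x‖ := norm_pos_iff.mpr hx0
      set r : ℝ := Real.exp (-lam * τ) with hrdef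
      have hr0 : 0 ≤ r := le_of_lt (Real.exp_pos _)
      have hr1 : r < 1 := by
        rw [hrdef]
        apply Real.exp_lt_one_iff.mpr
        nlinarith
      have htend : Filter.Tendsto (fun m : ℕ => K * r ^ m) Filter.atTop (nhds 0) := by
        have := tendsto_pow_atTop_nhds_zero_of_lt_one hr0 hr1
        simpa using this.const_mul K
      obtain ⟨m, hm'⟩ := (htend.eventually_lt_const one_pos).exists
      have hb := hstab 0 ((m : ℝ) * τ) (le_refl 0) (by positivity) x
      rw [hΦ0, inv_one, mul_one, hm m] at hb
      have : ‖x‖ ≤ K * r ^ m * ‖x‖ := by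
        have he : Real.exp (-lam * ((m : ℝ) * τ - 0)) = r ^ m := by
          rw [sub_zero, hrdef, ← Real.exp_nat_mul]
          ring_nf
        rw [he] at hb
        exact hb
      nlinarith
    intro x y hxy
    exact sub_eq_zero.mp (hker1 (x - y) (by rw [Matrix.mulVec_sub, hxy, sub_self]))
  have hITdet : IsUnit ((1 - (Φ τ)ᵀ).det) := by
    have h1 : (1 : Matrix (Fin n) (Fin n) ℝ) - (Φ τ)ᵀ = (1 - Φ τ)ᵀ := by
      rw [Matrix.transpose_sub, Matrix.transpose_one]
    rw [h1, Matrix.det_transpose]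
    exact (Matrix.isUnit_iff_isUnit_det _).mp hIunit
  -- the inverse path Ψ and its derivative
  set Ψ : ℝ → Matrix (Fin n) (Fin n) ℝ := fun t => (Φ t)⁻¹ with hΨdef
  have hΦΨ : ∀ t, Φ t * Ψ t = 1 := fun t => Matrix.mul_nonsing_inv _ (hdetΦ t)
  have hΨΦ : ∀ t, Ψ t * Φ t = 1 := fun t => Matrix.nonsing_inv_mul _ (hdetΦ t)
  have hΨd : ∀ (t : ℝ) (i j : Fin n), DifferentiableAt ℝ (fun s => Ψ s i j) t :=
    fun t i j => aux_inv_entry_diff (fun i j => hΦd t i j) (hdetΦ' t) i j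
  have hΨ' : ∀ (t : ℝ) (i j : Fin n),
      HasDerivAt (fun s => Ψ s i j) ((-(Ψ t * A t)) i j) t := by
    have hDm : ∀ t : ℝ, ∀ D : Matrix (Fin n) (Fin n) ℝ,
        (∀ i j, HasDerivAt (fun s => Ψ s i j) (D i j) t) → D = -(Ψ t * A t) := by
      intro t D hD
      have hprod : ∀ i j, HasDerivAt (fun s => (Ψ s * Φ s) i j)
          ((D * Φ t + Ψ t * (A t * Φ t)) i j) t := by
        intro i j
        have h1 : (fun s => (Ψ s * Φ s) i j) = fun s => ∑ k, Ψ s i k * Φ s k j := by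
          funext s; rw [Matrix.mul_apply]
        have h2 : (D * Φ t + Ψ t * (A t * Φ t)) i j
            = ∑ k, (D i k * Φ t k j + Ψ t i k * (A t * Φ t) k j) := by
          simp [Matrix.add_apply, Matrix.mul_apply, Finset.sum_add_distrib]
        rw [h1, h2]
        exact HasDerivAt.fun_sum fun k _ => (hD i k).mul (hΦ t k j)
      have hzero : ∀ i j, HasDerivAt (fun s => (Ψ s * Φ s) i j) 0 t := by
        intro i j
        have h1 : (fun s => (Ψ s * Φ s) i j) = fun _ => (1 : Matrix (Fin n) (Fin n) ℝ) i j := by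
          funext s; rw [hΨΦ s]
        rw [h1]
        exact hasDerivAt_const t _
      have hDΦ : D * Φ t + Ψ t * (A t * Φ t) = 0 := by
        ext i j
        have := (hprod i j).unique (hzero i j)
        simpa using this
      have h1 : D * Φ t = -(Ψ t * (A t * Φ t)) := by
        have := hDΦ
        rw [add_eq_zero_iff_eq_neg] at this
        exact this
      calc D = D * 1 := (mul_one D).symm
        _ = D * (Φ t * Ψ t) := by rw [hΦΨ t]
        _ = (D * Φ t) * Ψ t := by rw [Matrix.mul_assoc]
        _ = (-(Ψ t * (A t * Φ t))) * Ψ t := by rw [h1]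
        _ = -(Ψ t * A t) := by
            rw [Matrix.neg_mul, Matrix.mul_assoc (Ψ t) (A t * Φ t) (Ψ t),
              Matrix.mul_assoc (A t) (Φ t) (Ψ t), hΦΨ t, Matrix.mul_one]
    intro t i j
    have hder : ∀ i j, HasDerivAt (fun s => Ψ s i j)
        ((Matrix.of fun i j => deriv (fun s => Ψ s i j) t) i j) t :=
      fun i j => (hΨd t i j).hasDerivAt
    have := hDm t _ hder
    rw [← this]
    exact hder i j
  -- the forcing integral
  set gq : ℝ → (Fin n → ℝ) := fun s => (Φ s)ᵀ *ᵥ q s with hgqdef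
  have hgqc : Continuous gq := by
    refine continuous_pi fun i => ?_
    have h : (fun a => gq a i) = fun a => ∑ j, Φ a j i * q a j := rfl
    rw [h]
    exact continuous_finset_sum _ fun j _ => (hΦc j i).mul ((continuous_apply j).comp hqcont)
  set w : ℝ → (Fin n → ℝ) := fun t => ∫ s in (0:ℝ)..t, gq s with hwdef
  have hw : ∀ t, HasDerivAt w (gq t) t := by
    intro t
    exact intervalIntegral.integral_hasDerivAt_right
      (hgqc.intervalIntegrable _ _)
      (hgqc.stronglyMeasurable.stronglyMeasurableAtFilter)
      hgqc.continuousAt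
  set cv : Fin n → ℝ := (1 - (Φ τ)ᵀ)⁻¹ *ᵥ w τ with hcvdef
  set η : ℝ → (Fin n → ℝ) := fun t => (Ψ t)ᵀ *ᵥ (cv - w t) with hηdef
  -- derivative of η
  have hη' : ∀ t : ℝ, HasDerivAt η (-((A t)ᵀ *ᵥ (η t) + q t)) t := by
    intro t
    have hv : HasDerivAt (fun s => cv - w s) (-(gq t)) t := (hw t).const_sub cv
    have hvj := hasDerivAt_pi.mp hv
    have hraw : HasDerivAt η ((-(Ψ t * A t))ᵀ *ᵥ (cv - w t) + (Ψ t)ᵀ *ᵥ (-(gq t))) t := by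
      rw [hasDerivAt_pi]
      intro i
      have h1 : (fun s => η s i) = fun s => ∑ j, Ψ s j i * (cv - w s) j := rfl
      have h2 : ((-(Ψ t * A t))ᵀ *ᵥ (cv - w t) + (Ψ t)ᵀ *ᵥ (-(gq t))) i
          = ∑ j, ((-(Ψ t * A t)) j i * (cv - w t) j + Ψ t j i * ((-(gq t)) j)) := by
        show (∑ j, (-(Ψ t * A t)) j i * (cv - w t) j) + (∑ j, Ψ t j i * ((-(gq t)) j)) = _
        rw [← Finset.sum_add_distrib]
      rw [h1, h2]
      exact HasDerivAt.fun_sum fun j _ => (hΨ' t j i).mul (hvj j)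
    have halg : (-(Ψ t * A t))ᵀ *ᵥ (cv - w t) + (Ψ t)ᵀ *ᵥ (-(gq t))
        = -((A t)ᵀ *ᵥ (η t) + q t) := by
      have e1 : (-(Ψ t * A t))ᵀ *ᵥ (cv - w t) = -((A t)ᵀ *ᵥ (η t)) := by
        rw [Matrix.transpose_neg, Matrix.transpose_mul, Matrix.neg_mulVec,
          ← Matrix.mulVec_mulVec]
      have e2 : (Ψ t)ᵀ *ᵥ (-(gq t)) = -(q t) := by
        rw [Matrix.mulVec_neg]
        have e3 : (Ψ t)ᵀ *ᵥ (gq t) = q t := by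
          show (Ψ t)ᵀ *ᵥ ((Φ t)ᵀ *ᵥ q t) = q t
          rw [Matrix.mulVec_mulVec, ← Matrix.transpose_mul, hΦΨ t, Matrix.transpose_one,
            Matrix.one_mulVec]
        rw [e3]
      rw [e1, e2, neg_add]
    rw [← halg]
    exact hraw
  have hbc : η 0 = η τ := by
    have hw0 : w 0 = 0 := intervalIntegral.integral_same
    have hΨ0 : Ψ 0 = 1 := by
      show (Φ 0)⁻¹ = 1
      rw [hΦ0, inv_one]
    have hη0 : η 0 = cv := by
      show (Ψ 0)ᵀ *ᵥ (cv - w 0) = cv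
      rw [hΨ0, hw0, Matrix.transpose_one, Matrix.one_mulVec, sub_zero]
    have hcv1 : (1 - (Φ τ)ᵀ) *ᵥ cv = w τ := by
      show (1 - (Φ τ)ᵀ) *ᵥ ((1 - (Φ τ)ᵀ)⁻¹ *ᵥ w τ) = w τ
      rw [Matrix.mulVec_mulVec, Matrix.mul_nonsing_inv _ hITdet, Matrix.one_mulVec]
    have hcv2 : cv - w τ = (Φ τ)ᵀ *ᵥ cv := by
      rw [Matrix.sub_mulVec, Matrix.one_mulVec] at hcv1
      rw [← hcv1]
      exact sub_sub_cancel cv ((Φ τ)ᵀ *ᵥ cv)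
    have hητ : η τ = cv := by
      show (Ψ τ)ᵀ *ᵥ (cv - w τ) = cv
      rw [hcv2, Matrix.mulVec_mulVec, ← Matrix.transpose_mul, hΦΨ τ, Matrix.transpose_one,
        Matrix.one_mulVec]
    rw [hη0, hητ]
  refine ⟨η, fun t _ => hη' t, hbc, ?_⟩
  -- uniqueness
  intro η₂ hη₂ hbc₂ t ht
  set δ : ℝ → (Fin n → ℝ) := fun s => η₂ s - η s with hδdef
  have hδ : ∀ s ∈ Set.Icc (0:ℝ) τ, HasDerivAt δ ((-(A s)ᵀ) *ᵥ δ s) s := by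
    intro s hs
    have hsub := (hη₂ s hs).sub (hη' s)
    have heq : -((A s)ᵀ *ᵥ η₂ s + q s) - -((A s)ᵀ *ᵥ η s + q s) = (-(A s)ᵀ) *ᵥ δ s := by
      rw [Matrix.neg_mulVec]
      show _ = -((A s)ᵀ *ᵥ (η₂ s - η s))
      rw [Matrix.mulVec_sub]
      abel
    rwa [heq] at hsub
  have hδj' : ∀ s ∈ Set.Icc (0:ℝ) τ, ∀ j,
      HasDerivAt (fun r => δ r j) (((-(A s)ᵀ) *ᵥ δ s) j) s :=
    fun s hs => hasDerivAt_pi.mp (hδ s hs)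
  set u : ℝ → (Fin n → ℝ) := fun r => (Φ r)ᵀ *ᵥ δ r with hudef
  have hu : ∀ s ∈ Set.Icc (0:ℝ) τ,
      HasDerivAt u ((0 : Matrix (Fin n) (Fin n) ℝ) *ᵥ u s) s := by
    intro s hs
    have hvec : ((A s * Φ s)ᵀ *ᵥ δ s) + ((Φ s)ᵀ *ᵥ ((-(A s)ᵀ) *ᵥ δ s)) = 0 := by
      rw [Matrix.transpose_mul, Matrix.mulVec_mulVec, Matrix.mul_neg, Matrix.neg_mulVec]
      exact add_neg_cancel _
    rw [hasDerivAt_pi]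
    intro i
    have h1 : (fun r => u r i) = fun r => ∑ j, Φ r j i * δ r j := rfl
    have hsum : HasDerivAt (fun r => ∑ j, Φ r j i * δ r j)
        (∑ j, ((A s * Φ s) j i * δ s j + Φ s j i * (((-(A s)ᵀ) *ᵥ δ s) j))) s :=
      HasDerivAt.fun_sum fun j _ => (hΦ s j i).mul (hδj' s hs j)
    have h2 : ((0 : Matrix (Fin n) (Fin n) ℝ) *ᵥ u s) i
        = ∑ j, ((A s * Φ s) j i * δ s j + Φ s j i * (((-(A s)ᵀ) *ᵥ δ s) j)) := by
      have h3 : ∑ j, ((A s * Φ s) j i * δ s j + Φ s j i * (((-(A s)ᵀ) *ᵥ δ s) j))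
          = (((A s * Φ s)ᵀ *ᵥ δ s) + ((Φ s)ᵀ *ᵥ ((-(A s)ᵀ) *ᵥ δ s))) i := by
        show _ = (∑ j, (A s * Φ s) j i * δ s j) + (∑ j, Φ s j i * (((-(A s)ᵀ) *ᵥ δ s) j))
        rw [← Finset.sum_add_distrib]
      rw [h3, hvec, Matrix.zero_mulVec]
    rw [h1, h2]
    exact hsum
  have huconst : Set.EqOn u (fun _ => u 0) (Set.Icc 0 τ) := by
    refine aux_ode_unique (fun _ => (0 : Matrix (Fin n) (Fin n) ℝ)) continuous_const 0 τ u _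
      hu (fun s _ => by
        simpa [Matrix.zero_mulVec] using hasDerivAt_const s (u 0)) rfl
  have hδτ : δ τ = δ 0 := by
    show η₂ τ - η τ = η₂ 0 - η 0
    rw [hbc₂, hbc]
  have hu0 : u 0 = δ 0 := by
    show (Φ 0)ᵀ *ᵥ δ 0 = δ 0
    rw [hΦ0, Matrix.transpose_one, Matrix.one_mulVec]
  have huτ : (Φ τ)ᵀ *ᵥ δ 0 = δ 0 := by
    have := huconst (Set.mem_Icc.mpr ⟨le_of_lt hτ, le_refl τ⟩)
    rw [hu0] at this
    calc (Φ τ)ᵀ *ᵥ δ 0 = (Φ τ)ᵀ *ᵥ δ τ := by rw [hδτ]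
      _ = u τ := rfl
      _ = δ 0 := this
  have hδ0 : δ 0 = 0 := by
    have h5 : (1 - (Φ τ)ᵀ) *ᵥ δ 0 = 0 := by
      rw [Matrix.sub_mulVec, Matrix.one_mulVec, huτ, sub_self]
    calc δ 0 = 1 *ᵥ δ 0 := (Matrix.one_mulVec _).symm
      _ = ((1 - (Φ τ)ᵀ)⁻¹ * (1 - (Φ τ)ᵀ)) *ᵥ δ 0 := by
          rw [Matrix.nonsing_inv_mul _ hITdet]
      _ = (1 - (Φ τ)ᵀ)⁻¹ *ᵥ ((1 - (Φ τ)ᵀ) *ᵥ δ 0) := by rw [Matrix.mulVec_mulVec]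
      _ = 0 := by rw [h5, Matrix.mulVec_zero]
  have hδzero : Set.EqOn δ (fun _ => (0 : Fin n → ℝ)) (Set.Icc 0 τ) := by
    refine aux_ode_unique (fun s => -(A s)ᵀ) ?_ 0 τ δ _ hδ
      (fun s _ => by
        simpa [Matrix.mulVec_zero] using hasDerivAt_const s (0 : Fin n → ℝ)) ?_
    · refine continuous_pi fun i => continuous_pi fun j => ?_
      show Continuous fun s => -(A s j i)
      exact ((continuous_apply i).comp ((continuous_apply j).comp hAcont)).neg
    · exact hδ0
  have := hδzero ht
  exact sub_eq_zero.mp this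
end

section
/- Let K₁, K₂, K₃, λ > 0 and let L : [0, T] → ℝ be continuous, nonnegative, nonincreasing in T in the sense of a family, satisfying for t ∈ [0, kτ] the bound L(t) ≤ ε e^{-λ(kτ - t)} + K₁K₂ ∫ₜ^{kτ} e^{-λ(s - t)} L(s)² ds with 0 < ε ≤ λ/(2K₁K₂). Then L(t) ≤ (λ/(K₁K₂)) e^{-λ(kτ - t)} for all t ∈ [0, kτ]. -/
/-- Exponential decay from a nonlinear integral inequality with small parameter `ε`. -/
theorem stmt_7 (K₁ K₂ K₃ lam τ ε : ℝ) (hK₁ : 0 < K₁) (hK₂ : 0 < K₂) (hK₃ : 0 < K₃)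
    (hlam : 0 < lam) (hτ : 0 < τ) (k : ℕ) (hk : 0 < k)
    (L : ℝ → ℝ)
    (hL : ContinuousOn L (Set.Icc 0 ((k : ℝ) * τ)))
    (hnn : ∀ t ∈ Set.Icc (0:ℝ) ((k : ℝ) * τ), 0 ≤ L t)
    (hε : 0 < ε) (hε2 : ε ≤ lam / (2 * K₁ * K₂))
    (hineq : ∀ t ∈ Set.Icc (0:ℝ) ((k : ℝ) * τ),
      L t ≤ ε * Real.exp (-lam * ((k : ℝ) * τ - t)) +
        K₁ * K₂ * ∫ s in t..((k : ℝ) * τ), Real.exp (-lam * (s - t)) * (L s) ^ 2) :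
    ∀ t ∈ Set.Icc (0:ℝ) ((k : ℝ) * τ),
      L t ≤ (lam / (K₁ * K₂)) * Real.exp (-lam * ((k : ℝ) * τ - t)) := by
  set T : ℝ := (k : ℝ) * τ with hT
  have hT0 : 0 < T := by positivity
  set C : ℝ := K₁ * K₂ with hC
  have hC0 : 0 < C := by positivity
  -- the auxiliary integrand
  set f : ℝ → ℝ := fun s => Real.exp (lam * (T - s)) * (L s) ^ 2 with hf
  have hfc : ContinuousOn f (Set.Icc 0 T) := by
    apply ContinuousOn.mul
    · exact (Real.continuous_exp.comp (continuous_const.mul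
        (continuous_const.sub continuous_id))).continuousOn
    · exact hL.pow 2
  have hfnn : ∀ s ∈ Set.Icc (0:ℝ) T, 0 ≤ f s := fun s _ => by positivity
  have hint : ∀ t ∈ Set.Icc (0:ℝ) T, IntervalIntegrable f MeasureTheory.volume t T := by
    intro t ht
    apply ContinuousOn.intervalIntegrable
    apply hfc.mono
    rw [Set.uIcc_of_le ht.2]
    exact Set.Icc_subset_Icc ht.1 le_rfl
  set φ : ℝ → ℝ := fun t => lam / 2 + C ^ 2 * ∫ s in t..T, f s with hφ
  have hφpos : ∀ t ∈ Set.Icc (0:ℝ) T, lam / 2 ≤ φ t := by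
    intro t ht
    have : 0 ≤ ∫ s in t..T, f s := by
      apply intervalIntegral.integral_nonneg ht.2
      intro s hs
      exact hfnn s ⟨le_trans ht.1 hs.1, hs.2⟩
    have h2 : 0 ≤ C ^ 2 * ∫ s in t..T, f s := mul_nonneg (sq_nonneg C) this
    simp only [hφ]
    linarith
  -- Claim A
  have claimA : ∀ t ∈ Set.Icc (0:ℝ) T, C * Real.exp (lam * (T - t)) * L t ≤ φ t := by
    intro t ht
    have h1 := hineq t ht
    have hE : 0 < Real.exp (lam * (T - t)) := Real.exp_pos _
    have key : Real.exp (lam * (T - t)) * ∫ s in t..T, Real.exp (-lam * (s - t)) * (L s) ^ 2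
        = ∫ s in t..T, f s := by
      rw [← intervalIntegral.integral_const_mul]
      apply intervalIntegral.integral_congr
      intro s _
      simp only [hf]
      rw [← mul_assoc, ← Real.exp_add]
      ring_nf
    have hCε : C * ε ≤ lam / 2 := by
      have h2 : ε * (2 * K₁ * K₂) ≤ lam := (le_div_iff₀ (by positivity)).mp hε2
      rw [hC]; nlinarith
    calc C * Real.exp (lam * (T - t)) * L t
        ≤ C * Real.exp (lam * (T - t)) * (ε * Real.exp (-lam * (T - t)) +
          C * ∫ s in t..T, Real.exp (-lam * (s - t)) * (L s) ^ 2) := by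
          apply mul_le_mul_of_nonneg_left h1 (by positivity)
      _ = C * ε * (Real.exp (lam * (T - t)) * Real.exp (-lam * (T - t))) +
          C ^ 2 * (Real.exp (lam * (T - t)) * ∫ s in t..T, Real.exp (-lam * (s - t)) * (L s) ^ 2) := by
          ring
      _ = C * ε + C ^ 2 * ∫ s in t..T, f s := by
          rw [← Real.exp_add, key]; ring_nf; norm_num
      _ ≤ φ t := by simp only [hφ]; linarith
  -- continuity of φ on Icc 0 T
  have hφc : ContinuousOn φ (Set.Icc 0 T) := by
    apply continuousOn_const.add (continuousOn_const.mul _)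
    have : Set.Icc (0:ℝ) T = Set.uIcc 0 T := (Set.uIcc_of_le hT0.le).symm
    rw [this]
    apply intervalIntegral.continuousOn_primitive_interval_left
    rw [← this]
    exact (hfc.integrableOn_compact isCompact_Icc)
  -- derivative of φ in interior
  have hφd : ∀ x ∈ Set.Ioo (0:ℝ) T, HasDerivAt φ (-(C ^ 2 * f x)) x := by
    intro x hx
    have hxIcc : x ∈ Set.Icc (0:ℝ) T := Set.Ioo_subset_Icc_self hx
    have hnhds : Set.Icc (0:ℝ) T ∈ nhds x := Icc_mem_nhds hx.1 hx.2
    have hca : ContinuousAt f x := (hfc x hxIcc).continuousAt hnhds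
    have hmeas : StronglyMeasurableAtFilter f (nhds x) :=
      ⟨Set.Icc 0 T, hnhds, (hfc.aestronglyMeasurable measurableSet_Icc)⟩
    have hI := intervalIntegral.integral_hasDerivAt_left (hint x hxIcc) hmeas hca
    have := (hI.const_mul (C ^ 2)).const_add (lam / 2)
    simpa [hφ, mul_neg] using this
  -- ψ := 1/φ and the monotone function h
  set ψ : ℝ → ℝ := fun t => (φ t)⁻¹ with hψ
  set h : ℝ → ℝ := fun t => (1 / lam) * Real.exp (-lam * (T - t)) - ψ t with hh
  have hφne : ∀ t ∈ Set.Icc (0:ℝ) T, φ t ≠ 0 := fun t ht =>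
    ne_of_gt (lt_of_lt_of_le (by positivity) (hφpos t ht))
  have hhc : ContinuousOn h (Set.Icc 0 T) := by
    apply ContinuousOn.sub
    · exact (continuous_const.mul (Real.continuous_exp.comp
        (continuous_const.mul (continuous_const.sub continuous_id)))).continuousOn
    · exact hφc.inv₀ hφne
  have hmono : MonotoneOn h (Set.Icc 0 T) := by
    have hint' : interior (Set.Icc (0:ℝ) T) = Set.Ioo 0 T := interior_Icc
    apply monotoneOn_of_hasDerivWithinAt_nonneg (convex_Icc 0 T) hhc
      (f' := fun x => lam * ((1/lam) * Real.exp (-lam * (T - x))) - (-( -(C ^ 2 * f x)) / (φ x) ^ 2))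
    · intro x hx
      rw [hint'] at hx ⊢
      have hxIcc : x ∈ Set.Icc (0:ℝ) T := Set.Ioo_subset_Icc_self hx
      have h1 : HasDerivAt (fun t => (1 / lam) * Real.exp (-lam * (T - t)))
          (lam * ((1/lam) * Real.exp (-lam * (T - x)))) x := by
        have : HasDerivAt (fun t => -lam * (T - t)) lam x := by
          have := ((hasDerivAt_id x).const_sub T).const_mul (-lam)
          simpa using this
        have := (Real.hasDerivAt_exp (-lam * (T - x))).comp x this
        have h2 := this.const_mul (1 / lam)
        rw [show lam * ((1/lam) * Real.exp (-lam * (T - x))) = 1 / lam * (Real.exp (-lam * (T - x)) * lam) by ring]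
        exact h2
      have h2 : HasDerivAt ψ (-( -(C ^ 2 * f x)) / (φ x) ^ 2) x := by
        have := (hφd x hx).inv (hφne x hxIcc)
        exact this
      exact ((h1.sub h2)).hasDerivWithinAt
    · intro x hx
      rw [hint'] at hx
      have hxIcc : x ∈ Set.Icc (0:ℝ) T := Set.Ioo_subset_Icc_self hx
      have hA := claimA x hxIcc
      have hE : 0 < Real.exp (lam * (T - x)) := Real.exp_pos _
      have hLnn := hnn x hxIcc
      have hφx : 0 < φ x := lt_of_lt_of_le (by positivity) (hφpos x hxIcc)
      -- need : C^2 * f x / φ x ^ 2 ≤ exp (-lam (T - x))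
      have hsq : (C * Real.exp (lam * (T - x)) * L x) ^ 2 ≤ (φ x) ^ 2 := by
        apply pow_le_pow_left₀ (by positivity) hA
      have hfx : C ^ 2 * f x = Real.exp (-lam * (T - x)) *
          (C * Real.exp (lam * (T - x)) * L x) ^ 2 := by
        simp only [hf]
        rw [show (-lam * (T - x)) = -(lam * (T - x)) by ring, Real.exp_neg]
        have e := Real.exp_ne_zero (lam * (T - x))
        field_simp
      have hkey : C ^ 2 * f x ≤ Real.exp (-lam * (T - x)) * (φ x) ^ 2 := by
        rw [hfx]
        apply mul_le_mul_of_nonneg_left hsq (Real.exp_pos _).le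
      have hstep : C ^ 2 * f x / (φ x) ^ 2 ≤ Real.exp (-lam * (T - x)) := by
        rw [div_le_iff₀ (by positivity)]
        exact hkey
      have : lam * ((1/lam) * Real.exp (-lam * (T - x))) = Real.exp (-lam * (T - x)) := by
        field_simp
      rw [this]
      have : -( -(C ^ 2 * f x)) / (φ x) ^ 2 = C ^ 2 * f x / (φ x) ^ 2 := by ring
      rw [this]
      linarith
  -- Claim B : φ t ≤ lam
  have claimB : ∀ t ∈ Set.Icc (0:ℝ) T, φ t ≤ lam := by
    intro t ht
    have hTmem : T ∈ Set.Icc (0:ℝ) T := ⟨hT0.le, le_rfl⟩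
    have := hmono ht hTmem ht.2
    have hφT : φ T = lam / 2 := by
      simp [hφ, intervalIntegral.integral_same]
    have hψT : ψ T = 2 / lam := by
      rw [hψ]; simp only []; rw [hφT]
      rw [inv_eq_one_div]
      field_simp
    simp only [hh] at this
    rw [hψT] at this
    have hexpT : Real.exp (-lam * (T - T)) = 1 := by simp
    rw [hexpT] at this
    -- this : 1/lam * exp(-lam (T-t)) - ψ t ≤ 1/lam * 1 - 2/lam
    have hexp_nn : 0 ≤ (1 / lam) * Real.exp (-lam * (T - t)) := by positivity
    have hψt : (1:ℝ) / lam ≤ ψ t := by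
      have : (1 / lam) * Real.exp (-lam * (T - t)) + 1 / lam ≤ ψ t := by
        have h2 : (1:ℝ)/lam * 1 - 2/lam = -(1/lam) := by field_simp; ring
        linarith [this]
      linarith
    have hφt : 0 < φ t := lt_of_lt_of_le (by positivity) (hφpos t ht)
    rw [hψ] at hψt
    simp only [] at hψt
    have h1 : φ t * (1 / lam) ≤ φ t * (φ t)⁻¹ :=
      mul_le_mul_of_nonneg_left hψt hφt.le
    rw [mul_inv_cancel₀ (ne_of_gt hφt), mul_one_div, div_le_one hlam] at h1
    exact h1
  -- conclude
  intro t ht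
  have hA := claimA t ht
  have hB := claimB t ht
  have hE : 0 < Real.exp (lam * (T - t)) := Real.exp_pos _
  have : C * Real.exp (lam * (T - t)) * L t ≤ lam := le_trans hA hB
  have hLt : L t ≤ lam / (C * Real.exp (lam * (T - t))) := by
    rw [le_div_iff₀ (by positivity)]
    nlinarith
  calc L t ≤ lam / (C * Real.exp (lam * (T - t))) := hLt
    _ = (lam / C) * Real.exp (-lam * (T - t)) := by
        rw [show (-lam * (T - t)) = -(lam * (T - t)) by ring, Real.exp_neg]
        field_simp
end

section
/- Let A, Θ : [0, ∞) → matrices be bounded measurable, with A n × n and Θ m × n, B n × m bounded measurable, and let Φ_Θ solve Φ'(t) = (A(t) + B(t)Θ(t))Φ(t), Φ(0) = I with estimate |Φ_Θ(t)Φ_Θ(s)^{-1}| ≤ K e^{-λ(t-s)} for 0 ≤ s ≤ t. Suppose h : [0, T] → ℝⁿ satisfies the terminal-value linear ODE h'(t) + (A(t) + B(t)Θ(t))ᵀ h(t) + l(t) = 0, h(T) = h_T, with |h_T| ≤ K₀ and |l(t)| ≤ K₀ e^{-λ(T-t)}(|h(t)| + 1). Then there exist constants K', λ' > 0 depending only on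 K, K₀, λ such that |h(t)| ≤ K' e^{-λ'(T-t)} for all t ∈ [0, T]. -/
open Matrix

lemma mulVec_norm_le_of_entries {n p : ℕ} (N : Matrix (Fin p) (Fin n) ℝ) {c : ℝ} (hc : 0 ≤ c)
    (hN : ∀ i j, |N i j| ≤ c) (x : Fin n → ℝ) : ‖N.mulVec x‖ ≤ n * c * ‖x‖ := by
  rw [pi_norm_le_iff_of_nonneg (by positivity)]
  intro i
  rw [Real.norm_eq_abs]
  calc |N.mulVec x i| ≤ ∑ j, |N i j * x j| := by
        simpa [Matrix.mulVec, dotProduct] using Finset.abs_sum_le_sum_abs (fun j => N i j * x j) Finset.univ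
    _ ≤ ∑ _j : Fin n, c * ‖x‖ := by
        refine Finset.sum_le_sum fun j _ => ?_
        rw [abs_mul]
        exact mul_le_mul (hN i j) ((Real.norm_eq_abs _ ▸ norm_le_pi_norm x j)) (abs_nonneg _) hc
    _ = n * c * ‖x‖ := by simp [mul_assoc]

lemma entries_le_of_opbound {n : ℕ} (N : Matrix (Fin n) (Fin n) ℝ) {c : ℝ}
    (hN : ∀ x : Fin n → ℝ, ‖N.mulVec x‖ ≤ c * ‖x‖) (i j : Fin n) : |N i j| ≤ c := by
  have h1 := hN (Pi.single j 1)
  have h2 : ‖(Pi.single j 1 : Fin n → ℝ)‖ = 1 := by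
    rw [Pi.norm_single]; simp
  rw [h2, mul_one] at h1
  have h3 : N.mulVec (Pi.single j 1) i = N i j := by
    simp [Matrix.mulVec_single]
  calc |N i j| = ‖N.mulVec (Pi.single j 1) i‖ := by rw [h3, Real.norm_eq_abs]
    _ ≤ ‖N.mulVec (Pi.single j 1)‖ := norm_le_pi_norm _ i
    _ ≤ c := h1

lemma phi_isUnit {n : ℕ} (M Φ : ℝ → Matrix (Fin n) (Fin n) ℝ) (C : ℝ) (hC : 0 ≤ C)
    (hM : ∀ (t : ℝ) (i j : Fin n), |M t i j| ≤ C)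
    (hΦ : ∀ (t : ℝ) (i j : Fin n), HasDerivAt (fun s => Φ s i j) ((M t * Φ t) i j) t)
    (hΦ0 : Φ 0 = 1) : ∀ t : ℝ, 0 ≤ t → IsUnit (Φ t).det := by
  intro t ht
  rw [isUnit_iff_ne_zero]
  intro hdet
  obtain ⟨v, hv0, hv⟩ := (Matrix.exists_mulVec_eq_zero_iff).2 hdet
  set u : ℝ → Fin n → ℝ := fun s => (Φ (t - s)).mulVec v with hu_def
  have huder : ∀ s : ℝ, HasDerivAt u (-(M (t-s) * Φ (t-s)).mulVec v) s := by
    intro s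
    rw [hasDerivAt_pi]
    intro i
    have hj : ∀ j, HasDerivAt (fun s => Φ (t - s) i j) (-((M (t-s) * Φ (t-s)) i j)) s := by
      intro j
      have h2 : HasDerivAt (fun x : ℝ => t - x) (-1) s := (hasDerivAt_id s).const_sub t
      have h3 := (hΦ (t - s) i j).comp s h2
      rw [mul_neg_one] at h3
      exact h3
    have hsum := HasDerivAt.fun_sum (fun j (_ : j ∈ Finset.univ) => (hj j).mul_const (v j))
    have e1 : (fun s => ∑ j, Φ (t - s) i j * v j) = fun s => u s i := by
      funext s; simp [hu_def, Matrix.mulVec, dotProduct]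
    have e2 : (∑ j, -((M (t-s) * Φ (t-s)) i j) * v j) = (-(M (t-s) * Φ (t-s)).mulVec v) i := by
      simp [Matrix.mulVec, dotProduct]
    rw [e1, e2] at hsum
    exact hsum
  have hucont : ContinuousOn u (Set.Icc 0 t) := fun s _ => ((huder s).continuousAt).continuousWithinAt
  have ha : ‖u 0‖ ≤ (0:ℝ) := by simp [hu_def, hv]
  have hbound : ∀ s ∈ Set.Ico 0 t, ‖-(M (t-s) * Φ (t-s)).mulVec v‖ ≤ (n*C) * ‖u s‖ + 0 := by
    intro s _
    rw [norm_neg, add_zero, ← Matrix.mulVec_mulVec]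
    exact mulVec_norm_le_of_entries _ hC (hM (t-s)) _
  have hgron := norm_le_gronwallBound_of_norm_deriv_right_le hucont
    (fun s _ => (huder s).hasDerivWithinAt) ha hbound t (Set.right_mem_Icc.2 ht)
  rw [gronwallBound_ε0_δ0] at hgron
  have hut : u t = v := by simp [hu_def, hΦ0]
  rw [hut] at hgron
  exact hv0 (by simpa using norm_le_zero_iff.1 hgron)

lemma g_hasDeriv {n : ℕ} (M Φ : ℝ → Matrix (Fin n) (Fin n) ℝ) (h l : ℝ → Fin n → ℝ) (t : ℝ)
    (hΦ : ∀ (i j : Fin n), HasDerivAt (fun s => Φ s i j) ((M t * Φ t) i j) t)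
    (hh : HasDerivAt h (-((M t)ᵀ.mulVec (h t) + l t)) t) :
    HasDerivAt (fun s => (Φ s)ᵀ.mulVec (h s)) (-((Φ t)ᵀ.mulVec (l t))) t := by
  have key : ((M t * Φ t)ᵀ).mulVec (h t) + (Φ t)ᵀ.mulVec (-(((M t)ᵀ).mulVec (h t) + l t))
      = -((Φ t)ᵀ.mulVec (l t)) := by
    rw [Matrix.transpose_mul, ← Matrix.mulVec_mulVec, Matrix.mulVec_neg, Matrix.mulVec_add,
      Matrix.mulVec_mulVec]
    abel
  rw [hasDerivAt_pi]
  intro i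
  have hsum := HasDerivAt.fun_sum (u := Finset.univ)
    (fun j (_ : j ∈ Finset.univ) => (hΦ j i).fun_mul (hasDerivAt_pi.1 hh j))
  have e1 : (fun s => ∑ j, Φ s j i * h s j) = fun s => ((Φ s)ᵀ.mulVec (h s)) i := by
    funext s; simp [Matrix.mulVec, dotProduct]
  have e2 : (∑ j, ((M t * Φ t) j i * h t j + Φ t j i * (-((M t)ᵀ.mulVec (h t) + l t)) j))
      = (-((Φ t)ᵀ.mulVec (l t))) i := by
    have hki := congrFun key i
    rw [← hki]
    simp only [Matrix.mulVec, dotProduct, Pi.add_apply, Matrix.transpose_apply,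
      Finset.sum_add_distrib, ← Matrix.transpose_mul]
  rw [e1, e2] at hsum
  exact hsum

/-- Exponential turnpike estimate for the terminal-value linear ODE
`h' + (A + BΘ)ᵀ h + l = 0`, `h(T) = h_T`, with an exponentially stable closed-loop
transition matrix and an exponentially localized forcing term: the constants in
the conclusion depend only on `K, K₀, λ` (and the dimensions), not on `T`. -/
theorem stmt_11 {n m : ℕ} (K K₀ lam : ℝ) (hK : 0 < K) (hK₀ : 0 < K₀) (hlam : 0 < lam) :
    ∃ K' > (0:ℝ), ∃ lam' > (0:ℝ), ∀ T : ℝ, 0 < T →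
      ∀ (A : ℝ → Matrix (Fin n) (Fin n) ℝ) (B : ℝ → Matrix (Fin n) (Fin m) ℝ)
        (Θ : ℝ → Matrix (Fin m) (Fin n) ℝ),
      (∀ i j, Measurable fun t => A t i j) →
      (∀ i j, Measurable fun t => B t i j) →
      (∀ i j, Measurable fun t => Θ t i j) →
      (∃ C : ℝ, ∀ (t : ℝ) (i j : Fin n), |A t i j| ≤ C) →
      (∃ C : ℝ, ∀ (t : ℝ) (i : Fin n) (j : Fin m), |B t i j| ≤ C) →
      (∃ C : ℝ, ∀ (t : ℝ) (i : Fin m) (j : Fin n), |Θ t i j| ≤ C) →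
      ∀ Φ : ℝ → Matrix (Fin n) (Fin n) ℝ,
      (∀ (t : ℝ) (i j : Fin n),
        HasDerivAt (fun s => Φ s i j) (((A t + B t * Θ t) * Φ t) i j) t) →
      Φ 0 = 1 →
      (∀ s t : ℝ, 0 ≤ s → s ≤ t → ∀ x : Fin n → ℝ,
        ‖(Φ t * (Φ s)⁻¹).mulVec x‖ ≤ K * Real.exp (-lam * (t - s)) * ‖x‖) →
      ∀ (h l : ℝ → (Fin n → ℝ)) (hT : Fin n → ℝ),
      Continuous l →
      (∀ t ∈ Set.Icc (0:ℝ) T,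
        HasDerivAt h (-((A t + B t * Θ t)ᵀ.mulVec (h t) + l t)) t) →
      h T = hT → ‖hT‖ ≤ K₀ →
      (∀ t ∈ Set.Icc (0:ℝ) T,
        ‖l t‖ ≤ K₀ * Real.exp (-lam * (T - t)) * (‖h t‖ + 1)) →
      ∀ t ∈ Set.Icc (0:ℝ) T, ‖h t‖ ≤ K' * Real.exp (-lam' * (T - t)) := by
  set K₁ : ℝ := n * K * K₀ + 1 with hK₁def
  have hK₁ : 0 < K₁ := by positivity
  refine ⟨K₁ * Real.exp (K₁ / lam) * (1 + 2 / lam), by positivity, lam / 2, by positivity, ?_⟩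
  intro T hT0 A B Θ _ _ _ hCA' hCB' hCΘ' Φ hΦder hΦ0 hΦest h l hTv lcont hder hhT hhTnorm hl
  obtain ⟨CA, hCA⟩ := hCA'
  obtain ⟨CB, hCB⟩ := hCB'
  obtain ⟨CΘ, hCΘ⟩ := hCΘ'
  set M : ℝ → Matrix (Fin n) (Fin n) ℝ := fun t => A t + B t * Θ t with hMdef
  set CM : ℝ := |CA| + m * (|CB| * |CΘ|) with hCMdef
  have hCM : 0 ≤ CM := by positivity
  have hMbound : ∀ (t : ℝ) (i j : Fin n), |M t i j| ≤ CM := by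
    intro t i j
    have he : M t i j = A t i j + ∑ k, B t i k * Θ t k j := by
      simp [hMdef, Matrix.add_apply, Matrix.mul_apply]
    rw [he, hCMdef]
    refine (abs_add_le _ _).trans (add_le_add ((hCA t i j).trans (le_abs_self _)) ?_)
    calc |∑ k, B t i k * Θ t k j| ≤ ∑ k, |B t i k * Θ t k j| := Finset.abs_sum_le_sum_abs _ _
      _ ≤ ∑ _k : Fin m, |CB| * |CΘ| := by
          refine Finset.sum_le_sum fun k _ => ?_
          rw [abs_mul]
          exact mul_le_mul ((hCB t i k).trans (le_abs_self _))
            ((hCΘ t k j).trans (le_abs_self _)) (abs_nonneg _) (abs_nonneg _)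
      _ = m * (|CB| * |CΘ|) := by simp
  have hunit : ∀ s : ℝ, 0 ≤ s → IsUnit (Φ s).det :=
    phi_isUnit M Φ CM hCM hMbound hΦder hΦ0
  -- transpose operator bound
  have hTB : ∀ s u : ℝ, 0 ≤ s → s ≤ u → ∀ x : Fin n → ℝ,
      ‖((Φ u * (Φ s)⁻¹)ᵀ).mulVec x‖ ≤ n * (K * Real.exp (-lam * (u - s))) * ‖x‖ := by
    intro s u hs hsu x
    refine mulVec_norm_le_of_entries _ (by positivity) (fun i j => ?_) x
    rw [Matrix.transpose_apply]
    exact entries_le_of_opbound _ (fun y => hΦest s u hs hsu y) j i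
  -- continuity facts
  have hΦcont : ∀ i j, Continuous fun s => Φ s i j := fun i j =>
    continuous_iff_continuousAt.2 fun s => (hΦder s i j).continuousAt
  have hwcont : Continuous fun s => ((Φ s)ᵀ).mulVec (l s) := by
    refine continuous_pi fun i => ?_
    simp only [Matrix.mulVec, dotProduct, Matrix.transpose_apply]
    exact continuous_finset_sum _ fun j _ =>
      (hΦcont j i).mul ((continuous_apply j).comp lcont)
  have hcont : ContinuousOn h (Set.Icc 0 T) := fun s hs =>
    ((hder s hs).continuousAt).continuousWithinAt
  -- integral formula for g
  have hg : ∀ t ∈ Set.Icc (0:ℝ) T, (Φ t)ᵀ.mulVec (h t)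
      = (Φ T)ᵀ.mulVec hTv + ∫ s in t..T, (Φ s)ᵀ.mulVec (l s) := by
    intro t htm
    have hsub : Set.uIcc t T ⊆ Set.Icc 0 T := by
      rw [Set.uIcc_of_le htm.2]
      exact Set.Icc_subset_Icc htm.1 le_rfl
    have hftc := intervalIntegral.integral_eq_sub_of_hasDerivAt
      (f := fun s => (Φ s)ᵀ.mulVec (h s)) (f' := fun s => -((Φ s)ᵀ.mulVec (l s)))
      (fun s hs => g_hasDeriv M Φ h l s (hΦder s) (hder s (hsub hs)))
      ((hwcont.neg).intervalIntegrable t T)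
    rw [intervalIntegral.integral_neg, neg_eq_iff_eq_neg, neg_sub] at hftc
    have hftc' : (∫ s in t..T, (Φ s)ᵀ.mulVec (l s)) = (Φ t)ᵀ.mulVec (h t) - (Φ T)ᵀ.mulVec (h T) := hftc
    rw [hhT, eq_sub_iff_add_eq] at hftc'
    rw [← hftc']
    abel
  -- formula for h
  have hform : ∀ t ∈ Set.Icc (0:ℝ) T, h t
      = ((Φ T * (Φ t)⁻¹)ᵀ).mulVec hTv + ∫ s in t..T, ((Φ s * (Φ t)⁻¹)ᵀ).mulVec (l s) := by
    intro t htm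
    have huT : IsUnit ((Φ t)ᵀ).det := by
      rw [Matrix.det_transpose]; exact hunit t htm.1
    have h1 : h t = ((Φ t)ᵀ)⁻¹.mulVec ((Φ t)ᵀ.mulVec (h t)) := by
      rw [Matrix.mulVec_mulVec, Matrix.nonsing_inv_mul _ huT, Matrix.one_mulVec]
    rw [h1, hg t htm, Matrix.mulVec_add]
    congr 1
    · rw [Matrix.mulVec_mulVec, Matrix.transpose_mul, Matrix.transpose_nonsing_inv]
    · set L := LinearMap.toContinuousLinearMap (Matrix.mulVecLin (((Φ t)ᵀ)⁻¹)) with hLdef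
      have hLapp : ∀ y : Fin n → ℝ, L y = ((Φ t)ᵀ)⁻¹.mulVec y := fun y => rfl
      rw [show ((Φ t)ᵀ)⁻¹.mulVec (∫ s in t..T, (Φ s)ᵀ.mulVec (l s))
          = L (∫ s in t..T, (Φ s)ᵀ.mulVec (l s)) from rfl,
        ← L.intervalIntegral_comp_comm (hwcont.intervalIntegrable t T)]
      refine intervalIntegral.integral_congr fun s _ => ?_
      rw [hLapp, Matrix.mulVec_mulVec, Matrix.transpose_mul, Matrix.transpose_nonsing_inv]
  -- W
  set f : ℝ → ℝ := fun s => ‖h s‖ + 1 with hfdef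
  have hfcont : ContinuousOn f (Set.Icc 0 T) := (hcont.norm).add continuousOn_const
  set W : ℝ → ℝ := fun t => ∫ s in t..T, f s with hWdef
  have hfint : ∀ t ∈ Set.Icc (0:ℝ) T, IntervalIntegrable f MeasureTheory.volume t T := by
    intro t htm
    apply ContinuousOn.intervalIntegrable
    rw [Set.uIcc_of_le htm.2]
    exact hfcont.mono (Set.Icc_subset_Icc htm.1 le_rfl)
  have hWnonneg : ∀ t ∈ Set.Icc (0:ℝ) T, 0 ≤ W t := by
    intro t htm
    apply intervalIntegral.integral_nonneg htm.2
    intro s _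
    positivity
  have hWge : ∀ t ∈ Set.Icc (0:ℝ) T, T - t ≤ W t := by
    intro t htm
    have h1 : T - t = ∫ _s in t..T, (1:ℝ) := by simp
    rw [h1, hWdef]
    apply intervalIntegral.integral_mono_on htm.2 (by simp) (hfint t htm)
    intro s _
    simp only [hfdef]
    have := norm_nonneg (h s)
    linarith
  -- key estimate
  have key : ∀ t ∈ Set.Icc (0:ℝ) T,
      ‖h t‖ ≤ K₁ * Real.exp (-lam * (T - t)) * (1 + W t) := by
    intro t htm
    have hIcc : Set.Icc t T ⊆ Set.Icc 0 T := Set.Icc_subset_Icc htm.1 le_rfl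
    have hintcont : Continuous (fun s => ((Φ s * (Φ t)⁻¹)ᵀ).mulVec (l s)) := by
      refine continuous_pi fun i => ?_
      simp only [Matrix.mulVec, dotProduct, Matrix.transpose_apply, Matrix.mul_apply]
      refine continuous_finset_sum _ fun j _ => Continuous.mul ?_ ((continuous_apply j).comp lcont)
      exact continuous_finset_sum _ fun k _ => (hΦcont j k).mul continuous_const
    have hfirst : ‖((Φ T * (Φ t)⁻¹)ᵀ).mulVec hTv‖
        ≤ n * (K * Real.exp (-lam * (T - t))) * K₀ := by
      refine (hTB t T htm.1 htm.2 hTv).trans ?_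
      exact mul_le_mul_of_nonneg_left hhTnorm (by positivity)
    have hsecond : ‖∫ s in t..T, ((Φ s * (Φ t)⁻¹)ᵀ).mulVec (l s)‖
        ≤ (n * K * K₀ * Real.exp (-lam * (T - t))) * W t := by
      calc ‖∫ s in t..T, ((Φ s * (Φ t)⁻¹)ᵀ).mulVec (l s)‖
          ≤ ∫ s in t..T, ‖((Φ s * (Φ t)⁻¹)ᵀ).mulVec (l s)‖ :=
            intervalIntegral.norm_integral_le_integral_norm htm.2
        _ ≤ ∫ s in t..T, (n * K * K₀ * Real.exp (-lam * (T - t))) * f s := by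
            refine intervalIntegral.integral_mono_on htm.2 ?_ ((hfint t htm).const_mul _) ?_
            · exact (hintcont.norm).intervalIntegrable t T
            · intro s hs
              have hs0 : s ∈ Set.Icc (0:ℝ) T := hIcc hs
              have hstep := (hTB t s htm.1 hs.1 (l s)).trans
                (mul_le_mul_of_nonneg_left (hl s hs0) (by positivity))
              refine hstep.trans_eq ?_
              have hexp : Real.exp (-lam * (s - t)) * Real.exp (-lam * (T - s))
                  = Real.exp (-lam * (T - t)) := by
                rw [← Real.exp_add]; congr 1; ring
              simp only [hfdef]
              rw [← hexp]; ring
        _ = (n * K * K₀ * Real.exp (-lam * (T - t))) * W t := by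
            rw [hWdef]
            exact intervalIntegral.integral_const_mul _ _
    have hWn := hWnonneg t htm
    have hexp0 := Real.exp_pos (-lam * (T - t))
    calc ‖h t‖ = ‖((Φ T * (Φ t)⁻¹)ᵀ).mulVec hTv
          + ∫ s in t..T, ((Φ s * (Φ t)⁻¹)ᵀ).mulVec (l s)‖ := by rw [← hform t htm]
      _ ≤ ‖((Φ T * (Φ t)⁻¹)ᵀ).mulVec hTv‖
          + ‖∫ s in t..T, ((Φ s * (Φ t)⁻¹)ᵀ).mulVec (l s)‖ := norm_add_le _ _
      _ ≤ n * (K * Real.exp (-lam * (T - t))) * K₀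
          + (n * K * K₀ * Real.exp (-lam * (T - t))) * W t := add_le_add hfirst hsecond
      _ ≤ K₁ * Real.exp (-lam * (T - t)) * (1 + W t) := by
          have hid : K₁ * Real.exp (-lam * (T - t)) * (1 + W t)
              = n * (K * Real.exp (-lam * (T - t))) * K₀
                + (n * K * K₀ * Real.exp (-lam * (T - t))) * W t
                + (Real.exp (-lam * (T - t)) + Real.exp (-lam * (T - t)) * W t) := by
            rw [hK₁def]; ring
          linarith [mul_nonneg hexp0.le hWn, hexp0.le]
  -- derivative of W at interior points
  have hprim : ∀ t ∈ Set.Ioo (0:ℝ) T, HasDerivAt W (-(f t)) t := by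
    intro t htm
    have htm' : t ∈ Set.Icc (0:ℝ) T := Set.Ioo_subset_Icc_self htm
    have h1 : IntervalIntegrable f MeasureTheory.volume 0 t := by
      apply ContinuousOn.intervalIntegrable
      rw [Set.uIcc_of_le htm.1.le]
      exact hfcont.mono (Set.Icc_subset_Icc le_rfl htm.2.le)
    have hmeas : StronglyMeasurableAtFilter f (nhds t) :=
      (hfcont.mono Set.Ioo_subset_Icc_self).stronglyMeasurableAtFilter isOpen_Ioo t htm
    have hct : ContinuousAt f t := by
      exact ((hder t htm').continuousAt.norm).add continuousAt_const
    have hG := intervalIntegral.integral_hasDerivAt_right h1 hmeas hct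
    have heq : W =ᶠ[nhds t] fun u => (∫ s in (0:ℝ)..T, f s) - ∫ s in (0:ℝ)..u, f s := by
      filter_upwards [isOpen_Ioo.mem_nhds htm] with u hu
      have hu' : u ∈ Set.Icc (0:ℝ) T := Set.Ioo_subset_Icc_self hu
      have hu1 : IntervalIntegrable f MeasureTheory.volume 0 u := by
        apply ContinuousOn.intervalIntegrable
        rw [Set.uIcc_of_le hu'.1]
        exact hfcont.mono (Set.Icc_subset_Icc le_rfl hu'.2)
      have hadd := intervalIntegral.integral_add_adjacent_intervals hu1 (hfint u hu')
      simp only [hWdef]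
      linarith
    exact heq.hasDerivAt_iff.2 (hG.const_sub _)
  -- continuity of W on Icc
  have hWcont : ContinuousOn W (Set.Icc 0 T) := by
    have hIeq : Set.uIcc (0:ℝ) T = Set.Icc 0 T := Set.uIcc_of_le hT0.le
    have hint : MeasureTheory.IntegrableOn f (Set.uIcc (0:ℝ) T) MeasureTheory.volume := by
      rw [hIeq]; exact hfcont.integrableOn_compact isCompact_Icc
    rw [← hIeq]
    exact intervalIntegral.continuousOn_primitive_interval_left hint
  -- the comparison functions
  set c₂ : ℝ := K₁ / lam with hc₂def
  have hc₂pos : 0 < c₂ := by positivity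
  set E : ℝ → ℝ := fun u => Real.exp (c₂ * Real.exp (-lam * (T - u))) with hEdef
  set φ : ℝ → ℝ := fun u => (1 + W u) / (1 + (T - u)) with hφdef
  set ψ : ℝ → ℝ := fun u => φ u * E u with hψdef
  have hEcont : Continuous E := by
    apply Real.continuous_exp.comp
    exact continuous_const.mul (Real.continuous_exp.comp
      (continuous_const.mul (continuous_const.sub continuous_id)))
  have hψcont : ContinuousOn ψ (Set.Icc 0 T) := by
    refine ContinuousOn.mul (ContinuousOn.div (continuousOn_const.add hWcont) ?_ ?_)
      hEcont.continuousOn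
    · exact (continuous_const.add (continuous_const.sub continuous_id)).continuousOn
    · intro u hu
      have h2 := hu.2
      intro hc
      linarith [hc.le, hc.ge]
  have hψder : ∀ t ∈ Set.Ioo (0:ℝ) T, ∃ d, HasDerivAt ψ d t ∧ 0 ≤ d := by
    intro t htm
    have htm' : t ∈ Set.Icc (0:ℝ) T := Set.Ioo_subset_Icc_self htm
    have hdpos : (0:ℝ) < 1 + (T - t) := by linarith [htm.2]
    have hWd := hprim t htm
    have hdd : HasDerivAt (fun u : ℝ => 1 + (T - u)) (-1) t :=
      ((hasDerivAt_id t).const_sub T).const_add 1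
    have hφd := (((hasDerivAt_const t (1:ℝ)).fun_add hWd).fun_div hdd (ne_of_gt hdpos))
    have hEinner : HasDerivAt (fun u : ℝ => Real.exp (-lam * (T - u)))
        (lam * Real.exp (-lam * (T - t))) t := by
      have h1 : HasDerivAt (fun u : ℝ => -lam * (T - u)) lam t := by
        simpa using ((hasDerivAt_id t).const_sub T).const_mul (-lam)
      simpa [mul_comm] using h1.exp
    have hEd : HasDerivAt E (c₂ * (lam * Real.exp (-lam * (T - t))) * E t) t := by
      have h2 := (hEinner.const_mul c₂).exp
      simpa [hEdef, mul_assoc, mul_comm, mul_left_comm] using h2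
    refine ⟨_, hφd.mul hEd, ?_⟩
    have hkey := key t htm'
    have hWget := hWge t htm'
    have haexp := Real.exp_pos (-lam * (T - t))
    have hEt : 0 < E t := Real.exp_pos _
    have hc₂lam : c₂ * lam = K₁ := by
      rw [hc₂def]; field_simp
    have hX : 0 ≤ ((0 + -(f t)) * (1 + (T - t)) - (1 + W t) * (-1))
        + K₁ * Real.exp (-lam * (T - t)) * (1 + W t) * (1 + (T - t)) := by
      simp only [hfdef]
      nlinarith [mul_le_mul_of_nonneg_right hkey hdpos.le, hWget]
    have heq2 : ((0 + -(f t)) * (1 + (T - t)) - (1 + W t) * (-1)) / (1 + (T - t)) ^ 2 * E t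
        + (1 + W t) / (1 + (T - t)) * (c₂ * (lam * Real.exp (-lam * (T - t))) * E t)
        = E t * (((0 + -(f t)) * (1 + (T - t)) - (1 + W t) * (-1))
          + K₁ * Real.exp (-lam * (T - t)) * (1 + W t) * (1 + (T - t))) / (1 + (T - t)) ^ 2 := by
      rw [← hc₂lam]
      field_simp
    simp only [hφdef, hψdef, hEdef] at *
    rw [heq2]
    positivity
  have hψmono : MonotoneOn ψ (Set.Icc 0 T) := by
    refine monotoneOn_of_deriv_nonneg (convex_Icc 0 T) hψcont ?_ ?_
    · intro u hu
      rw [interior_Icc] at hu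
      obtain ⟨d, hd, _⟩ := hψder u hu
      exact hd.differentiableAt.differentiableWithinAt
    · intro u hu
      rw [interior_Icc] at hu
      obtain ⟨d, hd, hd0⟩ := hψder u hu
      rw [hd.deriv]
      exact hd0
  have hWT : W T = 0 := by simp [hWdef]
  have hψT : ψ T = Real.exp c₂ := by
    simp [hψdef, hφdef, hEdef, hWT]
  have hφle : ∀ t ∈ Set.Icc (0:ℝ) T, 1 + W t ≤ Real.exp c₂ * (1 + (T - t)) := by
    intro t htm
    have hdpos : (0:ℝ) < 1 + (T - t) := by linarith [htm.2]
    have h1 : ψ t ≤ ψ T := hψmono htm (Set.right_mem_Icc.2 hT0.le) htm.2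
    have hE1 : 1 ≤ E t := Real.one_le_exp (by positivity)
    have hφ0 : 0 ≤ φ t := div_nonneg (by linarith [hWnonneg t htm]) hdpos.le
    have h2 : φ t ≤ ψ t := by
      calc φ t = φ t * 1 := by ring
        _ ≤ φ t * E t := by exact mul_le_mul_of_nonneg_left hE1 hφ0
        _ = ψ t := rfl
    have h3 : φ t ≤ Real.exp c₂ := h2.trans (h1.trans_eq hψT)
    have h4 : (1 + W t) / (1 + (T - t)) ≤ Real.exp c₂ := h3
    calc 1 + W t = (1 + W t) / (1 + (T - t)) * (1 + (T - t)) := by field_simp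
      _ ≤ Real.exp c₂ * (1 + (T - t)) := mul_le_mul_of_nonneg_right h4 hdpos.le
  -- conclusion
  intro t htm
  have hτ : 0 ≤ T - t := by linarith [htm.2]
  have hkey := key t htm
  have hφlet := hφle t htm
  have hexp0 := Real.exp_pos (-lam * (T - t))
  have h5 : 1 + (T - t) ≤ (1 + 2 / lam) * Real.exp (lam / 2 * (T - t)) := by
    have he := Real.add_one_le_exp (lam / 2 * (T - t))
    have hpos1 : (0:ℝ) ≤ 1 + 2 / lam := by positivity
    have hmul := mul_le_mul_of_nonneg_left he hpos1
    have hexpand : (1 + 2 / lam) * (lam / 2 * (T - t) + 1)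
        = 1 + (T - t) + (lam / 2 * (T - t) + 2 / lam) := by field_simp; ring
    have hr1 : 0 ≤ lam / 2 * (T - t) := by positivity
    have hr2 : 0 ≤ 2 / lam := by positivity
    linarith
  have h6 : Real.exp (-lam * (T - t)) * (1 + (T - t))
      ≤ (1 + 2 / lam) * Real.exp (-(lam / 2) * (T - t)) := by
    calc Real.exp (-lam * (T - t)) * (1 + (T - t))
        ≤ Real.exp (-lam * (T - t)) * ((1 + 2 / lam) * Real.exp (lam / 2 * (T - t))) :=
          mul_le_mul_of_nonneg_left h5 hexp0.le
      _ = (1 + 2 / lam) * (Real.exp (-lam * (T - t)) * Real.exp (lam / 2 * (T - t))) := by ring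
      _ = (1 + 2 / lam) * Real.exp (-(lam / 2) * (T - t)) := by
          rw [← Real.exp_add]; congr 2; ring
  calc ‖h t‖ ≤ K₁ * Real.exp (-lam * (T - t)) * (1 + W t) := hkey
    _ ≤ K₁ * Real.exp (-lam * (T - t)) * (Real.exp c₂ * (1 + (T - t))) := by
        refine mul_le_mul_of_nonneg_left hφlet (by positivity)
    _ = K₁ * Real.exp c₂ * (Real.exp (-lam * (T - t)) * (1 + (T - t))) := by ring
    _ ≤ K₁ * Real.exp c₂ * ((1 + 2 / lam) * Real.exp (-(lam / 2) * (T - t))) := by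
        refine mul_le_mul_of_nonneg_left h6 (by positivity)
    _ = K₁ * Real.exp (K₁ / lam) * (1 + 2 / lam) * Real.exp (-(lam / 2) * (T - t)) := by
        rw [hc₂def]; ring
end

section
/- Suppose G : [0, T] → ℝ is differentiable, nonnegative, and satisfies G'(t) ≤ (−δβ + αK e^{−λ(T−t)}) G(t) + K(e^{−λ t} + e^{−λ(T−t)}) for all t ∈ [0, T], where α, β, δ, K, λ > 0 are constants independent of T with δβ ≠ λ. Then there exist constants K', λ' > 0 independent of T such that G(t) ≤ K'(G(0) e^{−λ' t} + e^{−λ' t} + e^{−λ'(T−t)}) for all t ∈ [0, T]. -/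
set_option maxHeartbeats 1000000


/-- Gronwall step for the turnpike estimate: a differential inequality with an
exponentially localized perturbation of the decay rate and two-sided exponential
forcing yields a two-sided exponential bound, uniformly in the horizon `T`. -/
theorem stmt_13 (α β δ K lam : ℝ) (hα : 0 < α) (hβ : 0 < β) (hδ : 0 < δ)
    (hK : 0 < K) (hlam : 0 < lam) (hne : δ * β ≠ lam) :
    ∃ K' > (0:ℝ), ∃ lam' > (0:ℝ), ∀ T : ℝ, 0 < T → ∀ G : ℝ → ℝ,
      (∀ t ∈ Set.Icc (0:ℝ) T, DifferentiableAt ℝ G t) →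
      (∀ t ∈ Set.Icc (0:ℝ) T, 0 ≤ G t) →
      (∀ t ∈ Set.Icc (0:ℝ) T,
        deriv G t ≤ (-(δ * β) + α * K * Real.exp (-lam * (T - t))) * G t +
          K * (Real.exp (-lam * t) + Real.exp (-lam * (T - t)))) →
      ∀ t ∈ Set.Icc (0:ℝ) T,
        G t ≤ K' * (G 0 * Real.exp (-lam' * t) + Real.exp (-lam' * t) +
          Real.exp (-lam' * (T - t))) := by
  have ha : (0:ℝ) < δ * β := mul_pos hδ hβ
  set a := δ * β with ha_def
  have hane : a - lam ≠ 0 := sub_ne_zero.mpr hne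
  have hapl : (0:ℝ) < a + lam := by positivity
  have habs : (0:ℝ) < |a - lam| := abs_pos.mpr hane
  set C := α * K / lam with hC_def
  have hC : 0 < C := by positivity
  have hClam : C * lam = α * K := div_mul_cancel₀ _ hlam.ne'
  set lam' := min a lam with hlam'_def
  have hlam'pos : 0 < lam' := lt_min ha hlam
  have hlam'a : lam' ≤ a := min_le_left _ _
  have hlam'lam : lam' ≤ lam := min_le_right _ _
  set D := 1 + K / |a - lam| + K / (a + lam) with hD_def
  have hq0 : 0 ≤ K / |a - lam| := by positivity
  have hr0 : 0 ≤ K / (a + lam) := by positivity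
  have hD1 : 1 ≤ D := by simp only [hD_def]; linarith
  have hexpC : 0 < Real.exp C := Real.exp_pos C
  refine ⟨Real.exp C * D, mul_pos hexpC (by linarith), lam', hlam'pos, ?_⟩
  intro T hT G hdiff hpos hineq t ht
  have ht0 : 0 ≤ t := ht.1
  have htT : t ≤ T := ht.2
  set v : ℝ → ℝ := fun s => Real.exp (-lam * (T - s)) with hv_def
  set φ : ℝ → ℝ := fun s => Real.exp (a * s - C * v s) with hφ_def
  set ψ : ℝ → ℝ := fun s => K / (a - lam) * Real.exp ((a - lam) * s)
      + K * Real.exp (-lam * T) / (a + lam) * Real.exp ((a + lam) * s) with hψ_def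
  have hvd : ∀ s : ℝ, HasDerivAt v (lam * v s) s := by
    intro s
    have h1 : HasDerivAt (fun s : ℝ => -lam * (T - s)) lam s := by
      have := ((hasDerivAt_id s).const_sub T).const_mul (-lam)
      simpa using this
    simpa [hv_def, mul_comm] using h1.exp
  have hφd : ∀ s : ℝ, HasDerivAt φ ((a - α * K * v s) * φ s) s := by
    intro s
    have h1 : HasDerivAt (fun s : ℝ => a * s - C * v s) (a - α * K * v s) s := by
      have h2 : HasDerivAt (fun x : ℝ => a * x) (a * 1) s := (hasDerivAt_id s).const_mul a
      have h3 := (hvd s).const_mul C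
      have h4 := h2.sub h3
      have e : a - α * K * v s = a * 1 - C * (lam * v s) := by rw [← hClam]; ring
      rw [e]; exact h4
    simpa [hφ_def, mul_comm] using h1.exp
  have hψd : ∀ s : ℝ, HasDerivAt ψ (K * Real.exp ((a - lam) * s)
      + K * Real.exp (-lam * T) * Real.exp ((a + lam) * s)) s := by
    intro s
    have h1 : HasDerivAt (fun x : ℝ => Real.exp ((a - lam) * x))
        (Real.exp ((a - lam) * s) * ((a - lam) * 1)) s :=
      ((hasDerivAt_id s).const_mul (a - lam)).exp
    have h2 : HasDerivAt (fun x : ℝ => Real.exp ((a + lam) * x))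
        (Real.exp ((a + lam) * s) * ((a + lam) * 1)) s :=
      ((hasDerivAt_id s).const_mul (a + lam)).exp
    have h3 := (h1.const_mul (K / (a - lam))).add (h2.const_mul (K * Real.exp (-lam * T) / (a + lam)))
    have hapl' : a + lam ≠ 0 := hapl.ne'
    have e : K * Real.exp ((a - lam) * s) + K * Real.exp (-lam * T) * Real.exp ((a + lam) * s)
        = K / (a - lam) * (Real.exp ((a - lam) * s) * ((a - lam) * 1))
          + K * Real.exp (-lam * T) / (a + lam) * (Real.exp ((a + lam) * s) * ((a + lam) * 1)) := by
      field_simp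
    rw [e]; exact h3
  set F : ℝ → ℝ := fun s => ψ s - G s * φ s with hF_def
  have hcont : ContinuousOn F (Set.Icc 0 T) := by
    apply ContinuousOn.sub
    · exact fun s _ => ((hψd s).differentiableAt.continuousAt).continuousWithinAt
    · exact fun s hs => (((hdiff s hs).continuousAt).mul
        ((hφd s).differentiableAt.continuousAt)).continuousWithinAt
  have hFdiff : DifferentiableOn ℝ F (interior (Set.Icc (0:ℝ) T)) := by
    rw [interior_Icc]
    intro s hs
    have hsI : s ∈ Set.Icc (0:ℝ) T := ⟨hs.1.le, hs.2.le⟩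
    exact (((hψd s).differentiableAt).sub ((hdiff s hsI).mul
      (hφd s).differentiableAt)).differentiableWithinAt
  have hderiv : ∀ s ∈ interior (Set.Icc (0:ℝ) T), 0 ≤ deriv F s := by
    rw [interior_Icc]
    intro s hs
    have hsI : s ∈ Set.Icc (0:ℝ) T := ⟨hs.1.le, hs.2.le⟩
    have hG := (hdiff s hsI).hasDerivAt
    have hF : HasDerivAt F ((K * Real.exp ((a - lam) * s)
        + K * Real.exp (-lam * T) * Real.exp ((a + lam) * s))
        - (deriv G s * φ s + G s * ((a - α * K * v s) * φ s))) s :=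
      (hψd s).sub (hG.mul (hφd s))
    rw [hF.deriv]
    have hφpos : 0 < φ s := Real.exp_pos _
    have hvpos : 0 < v s := Real.exp_pos _
    have hGle : deriv G s ≤ (-a + α * K * v s) * G s
        + K * (Real.exp (-lam * s) + v s) := hineq s hsI
    have key : deriv G s * φ s + G s * ((a - α * K * v s) * φ s)
        ≤ K * (Real.exp (-lam * s) + v s) * φ s := by
      have h1 : deriv G s * φ s
          ≤ ((-a + α * K * v s) * G s + K * (Real.exp (-lam * s) + v s)) * φ s :=
        mul_le_mul_of_nonneg_right hGle hφpos.le
      calc deriv G s * φ s + G s * ((a - α * K * v s) * φ s)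
          ≤ ((-a + α * K * v s) * G s + K * (Real.exp (-lam * s) + v s)) * φ s
            + G s * ((a - α * K * v s) * φ s) := by linarith
        _ = K * (Real.exp (-lam * s) + v s) * φ s := by ring
    have hφle : φ s ≤ Real.exp (a * s) := by
      apply Real.exp_le_exp.mpr
      linarith [mul_pos hC hvpos]
    have key2 : K * (Real.exp (-lam * s) + v s) * φ s
        ≤ K * (Real.exp (-lam * s) + v s) * Real.exp (a * s) :=
      mul_le_mul_of_nonneg_left hφle (by positivity)
    have e1 : Real.exp (-lam * s) * Real.exp (a * s) = Real.exp ((a - lam) * s) := by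
      rw [← Real.exp_add]; ring_nf
    have e2 : v s * Real.exp (a * s) = Real.exp (-lam * T) * Real.exp ((a + lam) * s) := by
      simp only [hv_def]
      rw [← Real.exp_add, ← Real.exp_add]; ring_nf
    have key3 : K * (Real.exp (-lam * s) + v s) * Real.exp (a * s)
        = K * Real.exp ((a - lam) * s) + K * Real.exp (-lam * T) * Real.exp ((a + lam) * s) := by
      calc K * (Real.exp (-lam * s) + v s) * Real.exp (a * s)
          = K * (Real.exp (-lam * s) * Real.exp (a * s))
            + K * (v s * Real.exp (a * s)) := by ring
        _ = _ := by rw [e1, e2]; ring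
    linarith
  have hmono : MonotoneOn F (Set.Icc 0 T) :=
    monotoneOn_of_deriv_nonneg (convex_Icc 0 T) hcont hFdiff hderiv
  have h0mem : (0:ℝ) ∈ Set.Icc (0:ℝ) T := ⟨le_refl 0, hT.le⟩
  have hFle : F 0 ≤ F t := hmono h0mem ht ht0
  set M : ℝ := ψ t - ψ 0 + G 0 * φ 0 with hM_def
  have hHt : G t * φ t ≤ M := by
    simp only [hF_def] at hFle
    simp only [hM_def]
    linarith
  have hφtpos : 0 < φ t := Real.exp_pos _
  have hMpos : 0 ≤ M := le_trans (mul_nonneg (hpos t ht) hφtpos.le) hHt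
  have hv1t : v t ≤ 1 := by
    simp only [hv_def]
    rw [Real.exp_le_one_iff]
    linarith [mul_nonneg hlam.le (sub_nonneg.mpr htT)]
  have hφt : Real.exp (a * t - C) ≤ φ t := by
    apply Real.exp_le_exp.mpr
    linarith [mul_le_mul_of_nonneg_left hv1t hC.le]
  have hGt : G t ≤ M * Real.exp (C - a * t) := by
    have hGphi : G t * Real.exp (a * t - C) ≤ M :=
      le_trans (mul_le_mul_of_nonneg_left hφt (hpos t ht)) hHt
    have hzero : (a * t - C) + (C - a * t) = 0 := by ring
    have hcancel : Real.exp (a * t - C) * Real.exp (C - a * t) = 1 := by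
      rw [← Real.exp_add, hzero, Real.exp_zero]
    calc G t = G t * (Real.exp (a * t - C) * Real.exp (C - a * t)) := by
          rw [hcancel, mul_one]
      _ = G t * Real.exp (a * t - C) * Real.exp (C - a * t) := by ring
      _ ≤ M * Real.exp (C - a * t) :=
          mul_le_mul_of_nonneg_right hGphi (Real.exp_pos _).le
  -- now bound M * exp(C - a t)
  set e1t : ℝ := Real.exp (-lam' * t) with he1_def
  set e2t : ℝ := Real.exp (-lam' * (T - t)) with he2_def
  have he1pos : 0 < e1t := Real.exp_pos _
  have he2pos : 0 < e2t := Real.exp_pos _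
  have hG0 : 0 ≤ G 0 := hpos 0 h0mem
  set Ec : ℝ := Real.exp (C - a * t) with hEc_def
  have hEcpos : 0 < Ec := Real.exp_pos _
  set E1 : ℝ := Real.exp ((a - lam) * t) with hE1_def
  set E2 : ℝ := Real.exp ((a + lam) * t) with hE2_def
  have hM : M = K / (a - lam) * (E1 - 1)
      + K * Real.exp (-lam * T) / (a + lam) * (E2 - 1) + G 0 * φ 0 := by
    simp only [hM_def, hψ_def, mul_zero, Real.exp_zero, mul_one]
    ring
  -- bound 1 : G 0 * φ 0 * Ec ≤ exp C * (G 0 * e1t)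
  have hφ0le : φ 0 ≤ 1 := by
    have hv0 : 0 < v 0 := Real.exp_pos _
    simp only [hφ_def]
    rw [Real.exp_le_one_iff]
    linarith [mul_pos hC hv0]
  have hEcle : Ec ≤ Real.exp C * e1t := by
    simp only [hEc_def, he1_def]
    rw [← Real.exp_add]
    apply Real.exp_le_exp.mpr
    linarith [mul_le_mul_of_nonneg_right hlam'a ht0]
  have hB1 : G 0 * φ 0 * Ec ≤ Real.exp C * (G 0 * e1t) := by
    calc G 0 * φ 0 * Ec ≤ (G 0 * 1) * (Real.exp C * e1t) := by
          apply mul_le_mul (mul_le_mul_of_nonneg_left hφ0le hG0) hEcle hEcpos.le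
          positivity
      _ = Real.exp C * (G 0 * e1t) := by ring
  -- bound 2
  have hB2 : K / (a - lam) * (E1 - 1) * Ec ≤ Real.exp C * (K / |a - lam|) * e1t := by
    rcases lt_or_gt_of_ne hne with hcase | hcase
    · -- a < lam
      have habs' : |a - lam| = lam - a := by
        rw [abs_of_neg (by linarith : a - lam < 0)]; ring
      have hE1le : E1 ≤ 1 := by
        simp only [hE1_def]
        rw [Real.exp_le_one_iff]
        have : 0 ≤ (lam - a) * t := mul_nonneg (by linarith) ht0
        linarith
      have h1 : K / (a - lam) * (E1 - 1) ≤ K / (lam - a) := by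
        have hE1pos : 0 < E1 := Real.exp_pos _
        have hla : (0:ℝ) < lam - a := by linarith
        have heq : K / (a - lam) * (E1 - 1) = K * (1 - E1) / (lam - a) := by
          rw [div_mul_eq_mul_div, div_eq_div_iff hane (ne_of_gt hla)]
          ring
        rw [heq, div_le_div_iff₀ hla hla]
        linarith [mul_pos (mul_pos hK hE1pos) hla]
      have h2 : K / (a - lam) * (E1 - 1) * Ec ≤ K / (lam - a) * Ec := by
        apply mul_le_mul_of_nonneg_right h1 hEcpos.le
      have h3 : Ec ≤ Real.exp C * e1t := hEcle
      calc K / (a - lam) * (E1 - 1) * Ec ≤ K / (lam - a) * Ec := h2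
        _ ≤ K / (lam - a) * (Real.exp C * e1t) := by
            apply mul_le_mul_of_nonneg_left h3 (le_of_lt (div_pos hK (by linarith)))
        _ = Real.exp C * (K / |a - lam|) * e1t := by rw [habs']; ring
    · -- lam < a
      have habs' : |a - lam| = a - lam := abs_of_pos (by linarith)
      have hcoef : 0 < K / (a - lam) := by
        apply div_pos hK; linarith
      have h1 : K / (a - lam) * (E1 - 1) ≤ K / (a - lam) * E1 := by
        apply mul_le_mul_of_nonneg_left (by linarith) hcoef.le
      have h2 : E1 * Ec = Real.exp C * Real.exp (-lam * t) := by
        simp only [hE1_def, hEc_def]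
        rw [← Real.exp_add, ← Real.exp_add]
        ring_nf
      have h3 : Real.exp (-lam * t) ≤ e1t := by
        simp only [he1_def]
        apply Real.exp_le_exp.mpr
        linarith [mul_le_mul_of_nonneg_right hlam'lam ht0]
      calc K / (a - lam) * (E1 - 1) * Ec ≤ K / (a - lam) * E1 * Ec := by
            apply mul_le_mul_of_nonneg_right h1 hEcpos.le
        _ = K / (a - lam) * (Real.exp C * Real.exp (-lam * t)) := by
            rw [mul_assoc, h2]
        _ ≤ K / (a - lam) * (Real.exp C * e1t) := by
            apply mul_le_mul_of_nonneg_left (mul_le_mul_of_nonneg_left h3 hexpC.le) hcoef.le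
        _ = Real.exp C * (K / |a - lam|) * e1t := by rw [habs']; ring
  -- bound 3
  have hB3 : K * Real.exp (-lam * T) / (a + lam) * (E2 - 1) * Ec
      ≤ Real.exp C * (K / (a + lam)) * e2t := by
    have hcoef : 0 < K * Real.exp (-lam * T) / (a + lam) := by positivity
    have h1 : K * Real.exp (-lam * T) / (a + lam) * (E2 - 1)
        ≤ K * Real.exp (-lam * T) / (a + lam) * E2 :=
      mul_le_mul_of_nonneg_left (by linarith) hcoef.le
    have h2 : Real.exp (-lam * T) * E2 * Ec = Real.exp C * Real.exp (-lam * (T - t)) := by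
      simp only [hE2_def, hEc_def]
      rw [← Real.exp_add, ← Real.exp_add, ← Real.exp_add]
      ring_nf
    have h3 : Real.exp (-lam * (T - t)) ≤ e2t := by
      simp only [he2_def]
      apply Real.exp_le_exp.mpr
      linarith [mul_le_mul_of_nonneg_right hlam'lam (sub_nonneg.mpr htT)]
    calc K * Real.exp (-lam * T) / (a + lam) * (E2 - 1) * Ec
        ≤ K * Real.exp (-lam * T) / (a + lam) * E2 * Ec := by
          apply mul_le_mul_of_nonneg_right h1 hEcpos.le
      _ = K / (a + lam) * (Real.exp (-lam * T) * E2 * Ec) := by ring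
      _ = K / (a + lam) * (Real.exp C * Real.exp (-lam * (T - t))) := by rw [h2]
      _ ≤ K / (a + lam) * (Real.exp C * e2t) := by
          apply mul_le_mul_of_nonneg_left (mul_le_mul_of_nonneg_left h3 hexpC.le) hr0
      _ = Real.exp C * (K / (a + lam)) * e2t := by ring
  -- assemble
  have hMEc : M * Ec = K / (a - lam) * (E1 - 1) * Ec
      + K * Real.exp (-lam * T) / (a + lam) * (E2 - 1) * Ec + G 0 * φ 0 * Ec := by
    rw [hM]; ring
  have hDq : K / |a - lam| ≤ D := by simp only [hD_def]; linarith
  have hDr : K / (a + lam) ≤ D := by simp only [hD_def]; linarith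
  have t1 : Real.exp C * (G 0 * e1t) ≤ Real.exp C * D * (G 0 * e1t) := by
    apply mul_le_mul_of_nonneg_right (le_mul_of_one_le_right hexpC.le hD1)
    exact mul_nonneg hG0 he1pos.le
  have t2 : Real.exp C * (K / |a - lam|) * e1t ≤ Real.exp C * D * e1t := by
    apply mul_le_mul_of_nonneg_right _ he1pos.le
    apply mul_le_mul_of_nonneg_left hDq hexpC.le
  have t3 : Real.exp C * (K / (a + lam)) * e2t ≤ Real.exp C * D * e2t := by
    apply mul_le_mul_of_nonneg_right _ he2pos.le
    apply mul_le_mul_of_nonneg_left hDr hexpC.le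
  clear_value a C lam' D e1t e2t Ec E1 E2 M
  have hsplit : Real.exp C * D * (G 0 * e1t + e1t + e2t)
      = Real.exp C * D * e1t + Real.exp C * D * e2t + Real.exp C * D * (G 0 * e1t) := by
    ring
  have hsum := add_le_add (add_le_add hB2 hB3) hB1
  have hsum2 := add_le_add (add_le_add t2 t3) t1
  have hfin : M * Ec ≤ Real.exp C * D * (G 0 * e1t + e1t + e2t) := by
    rw [hMEc, hsplit]
    exact hsum.trans hsum2
  exact hGt.trans hfin
end

section
/- Let A : [0, ∞) → Matrix (Fin n) (Fin n) ℝ be bounded measurable and τ-periodic, and let Φ be the fundamental solution of Φ' = AΦ, Φ(0) = I. Suppose there exists a continuous, τ-periodic, uniformly positive definite symmetric matrix function P with bounds αI ≤ P(t) ≤ βI (α, β > 0) satisfying the Lyapunov equation P'(t) + P(t)A(t) + A(t)ᵀP(t) + I = 0 for a.e. t. Then there exist constants K, λ > 0 such that |Φ(t)Φ(s)⁻¹| ≤ K e^{−λ(t−s)} for all 0 ≤ s ≤ t < ∞. -/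
open Matrix MeasureTheory

/-- Lyapunov stability criterion (deterministic case): if the periodic Lyapunov
equation `P' + PA + AᵀP + I = 0` admits a continuous `τ`-periodic solution with
uniform bounds `αI ≤ P(t) ≤ βI`, then the transition matrix of `x' = Ax` decays
exponentially. -/
theorem stmt_17 {n : ℕ} (τ : ℝ) (hτ : 0 < τ)
    (A : ℝ → Matrix (Fin n) (Fin n) ℝ)
    (hAmeas : ∀ i j, Measurable fun t => A t i j)
    (hAbd : ∃ C : ℝ, ∀ (t : ℝ) (i j : Fin n), |A t i j| ≤ C)
    (hAper : ∀ t : ℝ, A (t + τ) = A t)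
    (Φ : ℝ → Matrix (Fin n) (Fin n) ℝ)
    (hΦ : ∀ (t : ℝ) (i j : Fin n),
      HasDerivAt (fun s => Φ s i j) ((A t * Φ t) i j) t)
    (hΦ0 : Φ 0 = 1)
    (P P' : ℝ → Matrix (Fin n) (Fin n) ℝ)
    (hPcont : Continuous P)
    (hPper : ∀ t : ℝ, P (t + τ) = P t)
    (hPsymm : ∀ t : ℝ, (P t).IsSymm)
    (α β : ℝ) (hα : 0 < α) (hβ : 0 < β)
    (hPlow : ∀ t : ℝ, (P t - α • (1 : Matrix (Fin n) (Fin n) ℝ)).PosSemidef)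
    (hPup : ∀ t : ℝ, ((β • (1 : Matrix (Fin n) (Fin n) ℝ)) - P t).PosSemidef)
    (hPderiv : ∀ (t : ℝ) (i j : Fin n),
      HasDerivAt (fun s => P s i j) (P' t i j) t)
    (hLyap : ∀ᵐ t ∂(volume : Measure ℝ),
      P' t + P t * A t + (A t)ᵀ * P t + 1 = 0) :
    ∃ K > (0:ℝ), ∃ lam > (0:ℝ), ∀ s t : ℝ, 0 ≤ s → s ≤ t →
      ∀ x : Fin n → ℝ,
        ‖(Φ t * (Φ s)⁻¹).mulVec x‖ ≤ K * Real.exp (-lam * (t - s)) * ‖x‖ := by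
  classical
  -- quadratic form of a positive semidefinite real matrix is nonneg
  have hdotPS : ∀ (M : Matrix (Fin n) (Fin n) ℝ), M.PosSemidef →
      ∀ z : Fin n → ℝ, 0 ≤ z ⬝ᵥ (M *ᵥ z) := fun M h z => by simpa using h.dotProduct_mulVec_nonneg z
  have htrans : ∀ (M : Matrix (Fin n) (Fin n) ℝ) (x z : Fin n → ℝ),
      (M *ᵥ x) ⬝ᵥ z = x ⬝ᵥ (Mᵀ *ᵥ z) := by
    intro M x z; rw [dotProduct_mulVec, vecMul_transpose, dotProduct_comm]
  -- the key decay estimate along solutions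
  have key : ∀ (v : Fin n → ℝ) (s t : ℝ), s ≤ t →
      α * ((Φ t *ᵥ v) ⬝ᵥ (Φ t *ᵥ v)) ≤
        Real.exp (-(t - s) / β) * (β * ((Φ s *ᵥ v) ⬝ᵥ (Φ s *ᵥ v))) := by
    intro v s t hst
    set y : ℝ → Fin n → ℝ := fun r => Φ r *ᵥ v with hy_def
    have hy : ∀ (r : ℝ) (i : Fin n),
        HasDerivAt (fun u => y u i) ((A r *ᵥ y r) i) r := by
      intro r i
      have h1 : HasDerivAt (fun u => ∑ j, Φ u i j * v j)
          (∑ j, (A r * Φ r) i j * v j) r :=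
        HasDerivAt.fun_sum fun j _ => (hΦ r i j).mul_const (v j)
      have h1' : HasDerivAt (fun u => ((Φ u) *ᵥ v) i) (((A r * Φ r) *ᵥ v) i) r := by
        simpa [mulVec, dotProduct] using h1
      simpa [hy_def, mulVec_mulVec] using h1'
    set V : ℝ → ℝ := fun u => (P u *ᵥ y u) ⬝ᵥ y u with hV_def
    set g : ℝ → ℝ := fun r => (P' r *ᵥ y r) ⬝ᵥ y r
        + (P r *ᵥ (A r *ᵥ y r)) ⬝ᵥ y r + (P r *ᵥ y r) ⬝ᵥ (A r *ᵥ y r) with hg_def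
    have hV : ∀ r, HasDerivAt V (g r) r := by
      intro r
      have h2 : ∀ i : Fin n, HasDerivAt (fun u => (∑ j, P u i j * y u j) * y u i)
          ((∑ j, (P' r i j * y r j + P r i j * ((A r *ᵥ y r) j))) * y r i
            + (∑ j, P r i j * y r j) * ((A r *ᵥ y r) i)) r := by
        intro i
        exact (HasDerivAt.fun_sum fun j _ => (hPderiv r i j).fun_mul (hy r j)).fun_mul (hy r i)
      have h3 := HasDerivAt.fun_sum (fun i (_ : i ∈ Finset.univ) => h2 i)
      convert h3 using 1
      · rfl
      · rfl
      · rfl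
      simp [hg_def, dotProduct, mulVec, Finset.sum_add_distrib, add_mul,
        Finset.sum_mul, Finset.mul_sum]
    -- continuity facts
    have hycont : ∀ i, Continuous fun u => y u i := fun i =>
      continuous_iff_continuousAt.mpr fun u => (hy u i).continuousAt
    have hVcont : Continuous V :=
      continuous_iff_continuousAt.mpr fun u => (hV u).continuousAt
    have hdd : Continuous fun u => y u ⬝ᵥ y u := by
      simp only [dotProduct]
      exact continuous_finset_sum _ fun i _ => (hycont i).mul (hycont i)
    -- quadratic bounds
    have hVle : ∀ u, V u ≤ β * (y u ⬝ᵥ y u) := by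
      intro u
      have h0 := hdotPS _ (hPup u) (y u)
      simp only [sub_mulVec, smul_mulVec, one_mulVec, dotProduct_sub,
        dotProduct_smul, smul_eq_mul] at h0
      have hc : V u = y u ⬝ᵥ (P u *ᵥ y u) := dotProduct_comm _ _
      linarith
    have hVge : ∀ u, α * (y u ⬝ᵥ y u) ≤ V u := by
      intro u
      have h0 := hdotPS _ (hPlow u) (y u)
      simp only [sub_mulVec, smul_mulVec, one_mulVec, dotProduct_sub,
        dotProduct_smul, smul_eq_mul] at h0
      have hc : V u = y u ⬝ᵥ (P u *ᵥ y u) := dotProduct_comm _ _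
      linarith
    -- the exponential-weighted energy
    set E' : ℝ → ℝ := fun u => Real.exp (u / β) * (1 / β) * V u
        + Real.exp (u / β) * g u with hE'_def
    have hE : ∀ u, HasDerivAt (fun w => Real.exp (w / β) * V w) (E' u) u := by
      intro u
      have hexp : HasDerivAt (fun w : ℝ => Real.exp (w / β))
          (Real.exp (u / β) * (1 / β)) u := by
        simpa [one_div] using (HasDerivAt.exp ((hasDerivAt_id u).div_const β))
      simpa [hE'_def] using hexp.fun_mul (hV u)
    set h : ℝ → ℝ := fun u => Real.exp (u / β) * (1 / β) * V u
        - Real.exp (u / β) * (y u ⬝ᵥ y u) with hh_def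
    have hhcont : Continuous h := by
      have hec : Continuous fun u : ℝ => Real.exp (u / β) :=
        Real.continuous_exp.comp (continuous_id.div_const β)
      exact ((hec.mul continuous_const).mul hVcont).sub (hec.mul hdd)
    -- a.e. identification of the derivative
    have hae : ∀ᵐ u ∂(volume : Measure ℝ), E' u = h u := by
      refine hLyap.mono fun u hu => ?_
      have hgval : g u = -(y u ⬝ᵥ y u) := by
        have c3 : (P u *ᵥ y u) ⬝ᵥ (A u *ᵥ y u)
            = y u ⬝ᵥ (((A u)ᵀ * P u) *ᵥ y u) := by
          rw [htrans, hPsymm u, mulVec_mulVec, dotProduct_comm,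
            htrans, transpose_mul, hPsymm u]
        have c2 : (P u *ᵥ (A u *ᵥ y u)) ⬝ᵥ y u
            = y u ⬝ᵥ ((P u * A u) *ᵥ y u) := by
          rw [mulVec_mulVec, dotProduct_comm]
        have c1 : (P' u *ᵥ y u) ⬝ᵥ y u = y u ⬝ᵥ (P' u *ᵥ y u) :=
          dotProduct_comm _ _
        have hsum : P' u + P u * A u + (A u)ᵀ * P u = -1 := by
          have := hu
          linear_combination (norm := module) this
        have : g u = y u ⬝ᵥ ((P' u + P u * A u + (A u)ᵀ * P u) *ᵥ y u) := by
          rw [hg_def]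
          simp only [add_mulVec, dotProduct_add, c1, c2, c3]
        rw [this, hsum]
        simp [neg_mulVec, one_mulVec]
      rw [hE'_def, hh_def]
      simp only [hgval]
      ring
    have hInt : IntervalIntegrable E' volume s t :=
      (hhcont.intervalIntegrable s t).congr_ae
        (ae_restrict_of_ae (hae.mono fun u hu => hu.symm))
    have hfund : ∫ u in s..t, E' u = Real.exp (t / β) * V t
        - Real.exp (s / β) * V s :=
      intervalIntegral.integral_eq_sub_of_hasDerivAt (fun u _ => hE u) hInt
    have hcongr : ∫ u in s..t, E' u = ∫ u in s..t, h u :=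
      intervalIntegral.integral_congr_ae (hae.mono fun u hu _ => hu)
    have hnonpos : ∫ u in s..t, h u ≤ 0 := by
      have hptw : ∀ u, 0 ≤ -h u := by
        intro u
        have h1 : Real.exp (u / β) * (1 / β) * V u
            ≤ Real.exp (u / β) * (1 / β) * (β * (y u ⬝ᵥ y u)) := by
          apply mul_le_mul_of_nonneg_left (hVle u)
          positivity
        have h2 : Real.exp (u / β) * (1 / β) * (β * (y u ⬝ᵥ y u))
            = Real.exp (u / β) * (y u ⬝ᵥ y u) := by
          field_simp
        rw [hh_def]
        simp only
        linarith
      have : (0:ℝ) ≤ ∫ u in s..t, -h u :=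
        intervalIntegral.integral_nonneg (μ := volume) hst (fun u _ => hptw u)
      rw [intervalIntegral.integral_neg] at this
      linarith
    have hEle : Real.exp (t / β) * V t ≤ Real.exp (s / β) * V s := by
      rw [hcongr] at hfund; linarith
    -- assemble
    have hchain : Real.exp (t / β) * (α * (y t ⬝ᵥ y t))
        ≤ Real.exp (s / β) * (β * (y s ⬝ᵥ y s)) := by
      have e1 : Real.exp (t / β) * (α * (y t ⬝ᵥ y t)) ≤ Real.exp (t / β) * V t :=
        mul_le_mul_of_nonneg_left (hVge t) (Real.exp_pos _).le
      have e2 : Real.exp (s / β) * V s ≤ Real.exp (s / β) * (β * (y s ⬝ᵥ y s)) :=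
        mul_le_mul_of_nonneg_left (hVle s) (Real.exp_pos _).le
      linarith
    have hexp_eq : Real.exp (-(t - s) / β) = Real.exp (s / β) / Real.exp (t / β) := by
      rw [← Real.exp_sub]; ring_nf
    rw [hexp_eq, div_mul_eq_mul_div, le_div_iff₀ (Real.exp_pos _)]
    calc α * (y t ⬝ᵥ y t) * Real.exp (t / β)
        = Real.exp (t / β) * (α * (y t ⬝ᵥ y t)) := by ring
      _ ≤ Real.exp (s / β) * (β * (y s ⬝ᵥ y s)) := hchain
  -- norm comparisons in the sup norm
  have hdnn : ∀ z : Fin n → ℝ, 0 ≤ z ⬝ᵥ z := fun z =>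
    Finset.sum_nonneg fun i _ => mul_self_nonneg (z i)
  have hnorm_sq : ∀ z : Fin n → ℝ, ‖z‖ ^ 2 ≤ z ⬝ᵥ z := by
    intro z
    have hle : ‖z‖ ≤ Real.sqrt (z ⬝ᵥ z) := by
      rw [pi_norm_le_iff_of_nonneg (Real.sqrt_nonneg _)]
      intro i
      rw [Real.norm_eq_abs, show |z i| = Real.sqrt ((z i) ^ 2) from
        (Real.sqrt_sq_eq_abs _).symm]
      apply Real.sqrt_le_sqrt
      have : (z i) ^ 2 = z i * z i := sq (z i) ▸ by ring
      rw [this]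
      exact Finset.single_le_sum (f := fun j => z j * z j)
        (fun j _ => mul_self_nonneg (z j)) (Finset.mem_univ i)
    calc ‖z‖ ^ 2 ≤ Real.sqrt (z ⬝ᵥ z) ^ 2 :=
          pow_le_pow_left₀ (norm_nonneg _) hle 2
      _ = z ⬝ᵥ z := Real.sq_sqrt (hdnn z)
  have hdot_le : ∀ z : Fin n → ℝ, z ⬝ᵥ z ≤ (n + 1 : ℝ) * ‖z‖ ^ 2 := by
    intro z
    have h1 : ∀ i : Fin n, z i * z i ≤ ‖z‖ ^ 2 := by
      intro i
      have h2 : |z i| ≤ ‖z‖ := by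
        simpa [Real.norm_eq_abs] using norm_le_pi_norm z i
      calc z i * z i = |z i| * |z i| := (abs_mul_abs_self _).symm
        _ ≤ ‖z‖ * ‖z‖ := mul_le_mul h2 h2 (abs_nonneg _) (norm_nonneg _)
        _ = ‖z‖ ^ 2 := (sq ‖z‖).symm
    calc z ⬝ᵥ z = ∑ i, z i * z i := rfl
      _ ≤ ∑ _i : Fin n, ‖z‖ ^ 2 := Finset.sum_le_sum fun i _ => h1 i
      _ = (n : ℝ) * ‖z‖ ^ 2 := by simp [Finset.sum_const, mul_comm]
      _ ≤ (n + 1 : ℝ) * ‖z‖ ^ 2 := by nlinarith [sq_nonneg ‖z‖]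
  -- constants
  refine ⟨Real.sqrt ((n + 1 : ℝ) * β / α), Real.sqrt_pos.mpr (by positivity),
    (2 * β)⁻¹, by positivity, ?_⟩
  intro s t _hs hst x
  by_cases hdet : IsUnit (Φ s).det
  · set v : Fin n → ℝ := (Φ s)⁻¹ *ᵥ x with hv_def
    have hys : Φ s *ᵥ v = x := by
      rw [hv_def, mulVec_mulVec, mul_nonsing_inv _ hdet, one_mulVec]
    have hvec : (Φ t * (Φ s)⁻¹) *ᵥ x = Φ t *ᵥ v := (mulVec_mulVec _ _ _).symm
    have hk := key v s t hst
    rw [hys] at hk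
    set z : Fin n → ℝ := Φ t *ᵥ v with hz_def
    set R : ℝ := Real.sqrt ((n + 1 : ℝ) * β / α)
        * Real.exp (-(2 * β)⁻¹ * (t - s)) * ‖x‖ with hR_def
    have hRnn : 0 ≤ R := by
      rw [hR_def]; positivity
    have hsq : ‖z‖ ^ 2 ≤ R ^ 2 := by
      have e1 : α * ‖z‖ ^ 2 ≤ α * (z ⬝ᵥ z) :=
        mul_le_mul_of_nonneg_left (hnorm_sq z) hα.le
      have e2 : Real.exp (-(t - s) / β) * (β * (x ⬝ᵥ x))
          ≤ Real.exp (-(t - s) / β) * (β * ((n + 1 : ℝ) * ‖x‖ ^ 2)) := by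
        apply mul_le_mul_of_nonneg_left _ (Real.exp_pos _).le
        exact mul_le_mul_of_nonneg_left (hdot_le x) hβ.le
      have e3 : α * ‖z‖ ^ 2
          ≤ Real.exp (-(t - s) / β) * (β * ((n + 1 : ℝ) * ‖x‖ ^ 2)) := by
        linarith
      have hR2 : R ^ 2 = (n + 1 : ℝ) * β / α
          * Real.exp (-(t - s) / β) * ‖x‖ ^ 2 := by
        rw [hR_def, mul_pow, mul_pow, Real.sq_sqrt (by positivity),
          ← Real.exp_nat_mul]
        congr 2
        push_cast
        field_simp
      rw [hR2, div_mul_eq_mul_div, div_mul_eq_mul_div, le_div_iff₀ hα]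
      calc ‖z‖ ^ 2 * α = α * ‖z‖ ^ 2 := by ring
        _ ≤ Real.exp (-(t - s) / β) * (β * ((n + 1 : ℝ) * ‖x‖ ^ 2)) := e3
        _ = (n + 1 : ℝ) * β * Real.exp (-(t - s) / β) * ‖x‖ ^ 2 := by ring
    have : ‖z‖ ≤ R := by
      have := Real.sqrt_le_sqrt hsq
      rwa [Real.sqrt_sq (norm_nonneg z), Real.sqrt_sq hRnn] at this
    rw [show (Φ t * (Φ s)⁻¹).mulVec x = z from hvec]
    exact this
  · rw [nonsing_inv_apply_not_isUnit _ hdet]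
    simp only [mul_zero, Matrix.zero_mulVec, norm_zero]
    positivity
end

section
/- Let f : [0, T] → ℝ be continuous with f(t) ≤ K e^{-λ t} + K e^{-λ(T-t)} + K ∫₀ᵗ e^{-λ(T-s)} f(s) ds for all t ∈ [0, T], with f nonnegative and K, λ > 0 independent of T, and KT e^{-λT} bounded uniformly in T. Then there exists K' > 0 independent of T such that f(t) ≤ K'(e^{-λ t} + e^{-λ(T-t)}) for all t ∈ [0, T]. -/
open Set intervalIntegral

/-- `y * exp (-y) ≤ exp (-1)` for real `y`. -/
lemma aux_mul_exp_neg_le (y : ℝ) : y * Real.exp (-y) ≤ Real.exp (-1) := by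
  have h : y ≤ Real.exp (y - 1) := by linarith [Real.add_one_le_exp (y - 1)]
  have h2 : Real.exp (y - 1) * Real.exp (-y) = Real.exp (-1) := by
    rw [← Real.exp_add]; congr 1; ring
  calc y * Real.exp (-y) ≤ Real.exp (y - 1) * Real.exp (-y) :=
      mul_le_mul_of_nonneg_right h (Real.exp_pos _).le
    _ = Real.exp (-1) := h2

set_option maxHeartbeats 1000000 in
/-- Gronwall-type estimate with an exponentially concentrated kernel, uniform in `T`. -/
theorem stmt_19 (K lam : ℝ) (hK : 0 < K) (hlam : 0 < lam) :
    ∃ K' > (0:ℝ), ∀ T : ℝ, 0 < T → ∀ f : ℝ → ℝ,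
      ContinuousOn f (Set.Icc 0 T) →
      (∀ t ∈ Set.Icc (0:ℝ) T, 0 ≤ f t) →
      (∀ t ∈ Set.Icc (0:ℝ) T,
        f t ≤ K * Real.exp (-lam * t) + K * Real.exp (-lam * (T - t)) +
          K * ∫ s in (0:ℝ)..t, Real.exp (-lam * (T - s)) * f s) →
      ∀ t ∈ Set.Icc (0:ℝ) T,
        f t ≤ K' * (Real.exp (-lam * t) + Real.exp (-lam * (T - t))) := by
  refine ⟨K + K * Real.exp (K / lam) * (2 * K / (lam * Real.exp 1) + K / (2 * lam)),
    by positivity, ?_⟩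
  intro T hT f hfc hfnn hfin t ht
  -- continuous extension of f
  set proj : ℝ → ℝ := fun s => max 0 (min s T) with hproj
  have hprojmem : ∀ s, proj s ∈ Icc (0:ℝ) T :=
    fun s => ⟨le_max_left _ _, max_le hT.le (min_le_right s T)⟩
  have hprojeq : ∀ s ∈ Icc (0:ℝ) T, proj s = s := by
    intro s hs
    simp [hproj, min_eq_left hs.2, max_eq_right hs.1]
  set g : ℝ → ℝ := fun s => f (proj s) with hg
  have hgc : Continuous g := hfc.comp_continuous (by fun_prop) hprojmem
  have hgeq : ∀ s ∈ Icc (0:ℝ) T, g s = f s := by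
    intro s hs; rw [hg]; simp only [hprojeq s hs]
  have hgnn : ∀ s, 0 ≤ g s := fun s => hfnn _ (hprojmem s)
  -- the kernel
  set k : ℝ → ℝ := fun s => Real.exp (-lam * (T - s)) with hkdef
  have hkc : Continuous k := by fun_prop
  have hkpos : ∀ s, 0 < k s := fun s => Real.exp_pos _
  have hkle : ∀ s ∈ Icc (0:ℝ) T, k s ≤ 1 := by
    intro s hs
    rw [hkdef]
    simp only
    rw [show (1:ℝ) = Real.exp 0 by simp]
    apply Real.exp_le_exp.mpr
    nlinarith [hs.2]
  have hkgc : Continuous fun s => k s * g s := hkc.mul hgc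
  -- F = integral of k*g
  set F : ℝ → ℝ := fun u => ∫ s in (0:ℝ)..u, k s * g s with hFdef
  have hFderiv : ∀ u, HasDerivAt F (k u * g u) u := by
    intro u
    exact integral_hasDerivAt_right (hkgc.intervalIntegrable 0 u)
      (hkgc.stronglyMeasurableAtFilter _ _) hkgc.continuousAt
  have hFeq : ∀ u ∈ Icc (0:ℝ) T,
      (∫ s in (0:ℝ)..u, Real.exp (-lam * (T - s)) * f s) = F u := by
    intro u hu
    rw [hFdef]
    apply integral_congr
    intro s hs
    rw [uIcc_of_le hu.1] at hs
    have hsIcc : s ∈ Icc (0:ℝ) T := ⟨hs.1, hs.2.trans hu.2⟩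
    simp only [hgeq s hsIcc, hkdef]
  have hFnn : ∀ u ∈ Icc (0:ℝ) T, 0 ≤ F u := by
    intro u hu
    apply intervalIntegral.integral_nonneg hu.1
    intro s _
    exact mul_nonneg (hkpos s).le (hgnn s)
  -- Φ and φ
  set Φ : ℝ → ℝ := fun u => K / lam * k u with hΦdef
  have hΦderiv : ∀ u, HasDerivAt Φ (K * k u) u := by
    intro u
    have h1 : HasDerivAt (fun u : ℝ => -lam * (T - u)) lam u := by
      have := ((hasDerivAt_id u).const_sub T).const_mul (-lam)
      exact this.congr_deriv (by ring)
    have h2 : HasDerivAt k (k u * lam) u := h1.exp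
    have := h2.const_mul (K / lam)
    refine this.congr_deriv ?_
    field_simp
  have hΦnn : ∀ u, 0 ≤ Φ u := fun u => by positivity
  have hΦle : ∀ u ∈ Icc (0:ℝ) T, Φ u ≤ K / lam := by
    intro u hu
    rw [hΦdef]
    have := hkle u hu
    nlinarith [div_pos hK hlam]
  set φ : ℝ → ℝ := fun u => Real.exp (-Φ u) with hφdef
  have hφderiv : ∀ u, HasDerivAt φ (Real.exp (-Φ u) * -(K * k u)) u :=
    fun u => ((hΦderiv u).neg).exp
  have hφpos : ∀ u, 0 < φ u := fun u => Real.exp_pos _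
  have hφle : ∀ u, φ u ≤ 1 := by
    intro u
    rw [hφdef]
    simp only
    rw [show (1:ℝ) = Real.exp 0 by simp]
    exact Real.exp_le_exp.mpr (by linarith [hΦnn u])
  -- G and ψ
  set G : ℝ → ℝ := fun u => F u * φ u with hGdef
  have hGderiv : ∀ u, HasDerivAt G (φ u * k u * (g u - K * F u)) u := by
    intro u
    have := (hFderiv u).mul (hφderiv u)
    refine this.congr_deriv ?_
    simp only [hφdef]
    ring
  set ψ : ℝ → ℝ := fun u => K * Real.exp (-lam * T) * u
      + K / (2 * lam) * Real.exp (-(2 * lam) * (T - u)) with hψdef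
  have hψderiv : ∀ u, HasDerivAt ψ
      (K * Real.exp (-lam * T) + K * Real.exp (-(2 * lam) * (T - u))) u := by
    intro u
    have h1 : HasDerivAt (fun u : ℝ => K * Real.exp (-lam * T) * u)
        (K * Real.exp (-lam * T)) u := by
      simpa using (hasDerivAt_id u).const_mul (K * Real.exp (-lam * T))
    have h2 : HasDerivAt (fun u : ℝ => -(2 * lam) * (T - u)) (2 * lam) u := by
      have := ((hasDerivAt_id u).const_sub T).const_mul (-(2 * lam))
      exact this.congr_deriv (by ring)
    have h3 := (h2.exp).const_mul (K / (2 * lam))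
    have := h1.add h3
    refine this.congr_deriv ?_
    field_simp
  have hψnn : ∀ u, 0 ≤ u → 0 ≤ ψ u := by
    intro u hu
    rw [hψdef]
    positivity
  -- H = ψ - G is monotone on Icc
  set H : ℝ → ℝ := fun u => ψ u - G u with hHdef
  have hHderiv : ∀ u, HasDerivAt H
      (K * Real.exp (-lam * T) + K * Real.exp (-(2 * lam) * (T - u))
        - φ u * k u * (g u - K * F u)) u :=
    fun u => (hψderiv u).sub (hGderiv u)
  have hHmono : MonotoneOn H (Icc 0 T) := by
    apply monotoneOn_of_deriv_nonneg (convex_Icc 0 T)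
    · exact fun u _ => ((hHderiv u).continuousAt).continuousWithinAt
    · exact fun u _ => ((hHderiv u).differentiableAt).differentiableWithinAt
    · intro x hx
      rw [interior_Icc] at hx
      have hxI : x ∈ Icc (0:ℝ) T := ⟨hx.1.le, hx.2.le⟩
      rw [(hHderiv x).deriv]
      -- the core inequality
      have hfx := hfin x hxI
      rw [hFeq x hxI] at hfx
      have hgx : g x = f x := hgeq x hxI
      set a : ℝ := K * Real.exp (-lam * x) + K * Real.exp (-lam * (T - x)) with hadef
      have hapos : 0 < a := by positivity
      have hle : g x - K * F x ≤ a := by rw [hgx]; linarith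
      have hka : k x * a = K * Real.exp (-lam * T) + K * Real.exp (-(2 * lam) * (T - x)) := by
        have e1 : Real.exp (-lam * (T - x)) * Real.exp (-lam * x) = Real.exp (-lam * T) := by
          rw [← Real.exp_add]; congr 1; ring
        have e2 : Real.exp (-lam * (T - x)) * Real.exp (-lam * (T - x))
            = Real.exp (-(2 * lam) * (T - x)) := by
          rw [← Real.exp_add]; congr 1; ring
        simp only [hadef, hkdef]
        linear_combination K * e1 + K * e2
      rw [← hka]
      have h1 : φ x * k x * (g x - K * F x) ≤ φ x * k x * a :=
        mul_le_mul_of_nonneg_left hle (by positivity)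
      have h2 : φ x * k x * a ≤ k x * a := by
        have h3 : 0 ≤ (1 - φ x) * (k x * a) :=
          mul_nonneg (sub_nonneg.mpr (hφle x)) (mul_pos (hkpos x) hapos).le
        nlinarith [h3]
      linarith
  -- conclude G t ≤ ψ t
  have hH0 : H 0 = ψ 0 := by
    rw [hHdef, hGdef, hFdef]
    simp
  have hHt : H 0 ≤ H t := hHmono (left_mem_Icc.mpr hT.le) ht ht.1
  have hGψ : G t ≤ ψ t := by
    have hψ0 := hψnn 0 le_rfl
    have hG0 : G 0 = 0 := by simp [hGdef, hFdef]
    simp only [hHdef] at hHt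
    rw [hG0] at hHt
    linarith
  -- F t ≤ ψ t * exp (K/lam)
  have hFG : F t = G t * Real.exp (Φ t) := by
    rw [hGdef]
    simp only
    rw [hφdef]
    simp only
    rw [mul_assoc, ← Real.exp_add]
    simp
  have hGnn : 0 ≤ G t := mul_nonneg (hFnn t ht) (hφpos t).le
  have hFle : F t ≤ ψ t * Real.exp (K / lam) := by
    rw [hFG]
    apply mul_le_mul hGψ (Real.exp_le_exp.mpr (hΦle t ht)) (Real.exp_pos _).le
      (hψnn t ht.1)
  -- bound ψ t
  set e1 : ℝ := Real.exp (-lam * t) with he1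
  set e2 : ℝ := Real.exp (-lam * (T - t)) with he2
  have he1pos : 0 < e1 := Real.exp_pos _
  have he2pos : 0 < e2 := Real.exp_pos _
  have hmid : Real.exp (-(lam * T) / 2) ≤ e1 + e2 := by
    rcases le_or_gt t (T / 2) with h | h
    · have : Real.exp (-(lam * T) / 2) ≤ e1 := by
        rw [he1]; apply Real.exp_le_exp.mpr; nlinarith
      linarith
    · have : Real.exp (-(lam * T) / 2) ≤ e2 := by
        rw [he2]; apply Real.exp_le_exp.mpr; nlinarith
      linarith
  have hψbound : ψ t ≤ (2 * K / (lam * Real.exp 1) + K / (2 * lam)) * (e1 + e2) := by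
    have hb1 : K * Real.exp (-lam * T) * t ≤ 2 * K / (lam * Real.exp 1) * (e1 + e2) := by
      have hsplit : Real.exp (-lam * T) =
          Real.exp (-(lam * T) / 2) * Real.exp (-(lam * T) / 2) := by
        rw [← Real.exp_add]; congr 1; ring
      have hxy := aux_mul_exp_neg_le (lam * T / 2)
      -- (lam*T/2) * exp(-(lam*T/2)) ≤ exp (-1) = 1 / exp 1
      have hexp1 : Real.exp (-1) = 1 / Real.exp 1 := by
        rw [Real.exp_neg]; ring
      rw [hexp1] at hxy
      have hTexp : T * Real.exp (-(lam * T) / 2) ≤ 2 / (lam * Real.exp 1) := by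
        have h1 : lam * T / 2 * Real.exp (-(lam * T / 2)) ≤ 1 / Real.exp 1 := hxy
        have heq : Real.exp (-(lam * T / 2)) = Real.exp (-(lam * T) / 2) := by rw [neg_div]
        rw [heq] at h1
        rw [le_div_iff₀ (Real.exp_pos 1)] at h1
        rw [le_div_iff₀ (by positivity : (0:ℝ) < lam * Real.exp 1)]
        nlinarith [h1]
      calc K * Real.exp (-lam * T) * t
          ≤ K * Real.exp (-lam * T) * T :=
            mul_le_mul_of_nonneg_left ht.2 (by positivity)
        _ = K * (T * Real.exp (-(lam * T) / 2)) * Real.exp (-(lam * T) / 2) := by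
            rw [hsplit]; ring
        _ ≤ K * (2 / (lam * Real.exp 1)) * Real.exp (-(lam * T) / 2) := by
            apply mul_le_mul_of_nonneg_right _ (Real.exp_pos _).le
            exact mul_le_mul_of_nonneg_left hTexp hK.le
        _ ≤ 2 * K / (lam * Real.exp 1) * (e1 + e2) := by
            have h := hmid
            have hc : 0 < 2 * K / (lam * Real.exp 1) := by positivity
            calc K * (2 / (lam * Real.exp 1)) * Real.exp (-(lam * T) / 2)
                = 2 * K / (lam * Real.exp 1) * Real.exp (-(lam * T) / 2) := by ring
              _ ≤ 2 * K / (lam * Real.exp 1) * (e1 + e2) :=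
                  mul_le_mul_of_nonneg_left h hc.le
    have hb2 : K / (2 * lam) * Real.exp (-(2 * lam) * (T - t)) ≤ K / (2 * lam) * e2 := by
      apply mul_le_mul_of_nonneg_left _ (by positivity)
      rw [he2]
      apply Real.exp_le_exp.mpr
      nlinarith [ht.2]
    have hb3 : (0:ℝ) ≤ K / (2 * lam) * e1 :=
      mul_nonneg (by positivity) he1pos.le
    simp only [hψdef]
    nlinarith [hb1, hb2, hb3]
  -- finish
  have hft := hfin t ht
  rw [hFeq t ht, ← he1, ← he2] at hft
  have hKP : (0:ℝ) ≤ K * Real.exp (K / lam) := by positivity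
  have hfinal : K * Real.exp (K / lam) * ψ t
      ≤ K * Real.exp (K / lam) * ((2 * K / (lam * Real.exp 1) + K / (2 * lam)) * (e1 + e2)) :=
    mul_le_mul_of_nonneg_left hψbound hKP
  have hFle2 : K * F t ≤ K * (ψ t * Real.exp (K / lam)) :=
    mul_le_mul_of_nonneg_left hFle hK.le
  nlinarith [hft, hfinal, hFle2]
end
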